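/- arXiv:1311.4001 — 4 statements merged into one kernel-verified Lean document; each statement's English description precedes it below -/
import Mathlib

section
/- Let Π = (S, F, *) be a maximization problem and let M be its slack matrix, defined by M(f,s) = f* − f(s) for f ∈ F and s ∈ S. Then xc(Π) ≤ rank₊(M), i.e., from any rank-r nonnegative factorization of M one obtains an LP formulation of Π with at most r inequality constraints. -/
attribute [local instance] Classical.propDecidable

open Matrix Filter

noncomputable section

/-- The nonnegative rank of a real matrix: the least `r` such that `M = T * U`
with `T`, `U` entrywise nonnegative. -/
def nnegRank {m n : Type*} (M : Matrix m n ℝ) : ℕ :=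
  sInf { r : ℕ | ∃ (T : Matrix m (Fin r) ℝ) (U : Matrix (Fin r) n ℝ),
    (∀ i j, 0 ≤ T i j) ∧ (∀ i j, 0 ≤ U i j) ∧ M = T * U }

/-- An LP formulation of size `r` of the maximization problem with feasible solutions `S`,
objective functions indexed by `F` (given by `obj`), and approximation guarantees `guar`:
a system of `r` linear inequalities and `k` linear equations in `ℝ^d`, realizations `x s` of
feasible solutions (satisfying the system), realizations `w f` of objective functions
(`⟪w f, x s⟫ = obj f s`), such that the LP value is at most the guarantee. -/
def IsLPFormulation {S F : Type*} (obj : F → S → ℝ) (guar : F → ℝ) (r : ℕ) : Prop :=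
  ∃ (d k : ℕ) (Ai : Matrix (Fin r) (Fin d) ℝ) (bi : Fin r → ℝ)
    (Ae : Matrix (Fin k) (Fin d) ℝ) (be : Fin k → ℝ)
    (x : S → Fin d → ℝ) (w : F → Fin d → ℝ),
    (∀ s, (∀ i, Ai.mulVec (x s) i ≤ bi i) ∧ Ae.mulVec (x s) = be) ∧
    (∀ f s, w f ⬝ᵥ x s = obj f s) ∧
    (∀ f (y : Fin d → ℝ), (∀ i, Ai.mulVec y i ≤ bi i) → Ae.mulVec y = be →
      w f ⬝ᵥ y ≤ guar f)

/-- Formulation complexity: minimum size of an LP formulation. -/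
def xcLP {S F : Type*} (obj : F → S → ℝ) (guar : F → ℝ) : ℕ :=
  sInf { r | IsLPFormulation obj guar r }

/-- A stable (independent) set in a graph. -/
def IsStableSet {V : Type*} (G : SimpleGraph V) (s : Finset V) : Prop :=
  ∀ u ∈ s, ∀ v ∈ s, ¬ G.Adj u v

/-- The stability number of a graph. -/
def stabNum {V : Type*} [Fintype V] (G : SimpleGraph V) : ℕ :=
  sSup { k | ∃ s : Finset V, IsStableSet G s ∧ s.card = k }

/-- The formulation complexity of the maximum stable set problem `STAB(G)`:
feasible solutions are the stable sets of `G`, objective functions are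
`f_a(S) = |S ∩ a|` for `a ⊆ V(G)`, guarantees are `α(G[a])`. -/
def xcSTAB {V : Type*} [Fintype V] (G : SimpleGraph V) : ℕ :=
  xcLP (fun (a : Finset V) (s : {s : Finset V // IsStableSet G s}) => ((s.val ∩ a).card : ℝ))
       (fun a : Finset V => (stabNum (G.induce (↑a : Set V)) : ℝ))

/-- Probability of an event under the Erdős–Rényi distribution `G(n,p)`. -/
def erProb (n : ℕ) (p : ℝ) (E : SimpleGraph (Fin n) → Prop) : ℝ :=
  ∑ G : SimpleGraph (Fin n),
    if E G then p ^ Nat.card G.edgeSet * (1 - p) ^ (n.choose 2 - Nat.card G.edgeSet) else 0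

/-- The smaller endpoint of an unordered pair. -/
def sym2Min {α : Type*} [LinearOrder α] (e : Sym2 α) : α :=
  Sym2.lift ⟨fun a b => min a b, fun a b => min_comm a b⟩ e

/-- The larger endpoint of an unordered pair. -/
def sym2Max {α : Type*} [LinearOrder α] (e : Sym2 α) : α :=
  Sym2.lift ⟨fun a b => max a b, fun a b => max_comm a b⟩ e

/-- Adjacency of the gadget subdivision `T^g` with parameter `ℓ`: every edge `ij` of `T`
is replaced by a path with `2ℓ+3` edges between `i` and `j`, whose `2ℓ+2` internal vertices
are new and pairwise distinct across edges. -/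
def gadgetAdj {α : Type*} [LinearOrder α] (T : SimpleGraph α) (ℓ : ℕ) :
    (α ⊕ (↥T.edgeSet × Fin (2*ℓ+2))) → (α ⊕ (↥T.edgeSet × Fin (2*ℓ+2))) → Prop
  | Sum.inl _, Sum.inl _ => False
  | Sum.inl u, Sum.inr ek =>
      (ek.2.val = 0 ∧ u = sym2Min ek.1.val) ∨ (ek.2.val = 2*ℓ+1 ∧ u = sym2Max ek.1.val)
  | Sum.inr ek, Sum.inl u =>
      (ek.2.val = 0 ∧ u = sym2Min ek.1.val) ∨ (ek.2.val = 2*ℓ+1 ∧ u = sym2Max ek.1.val)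
  | Sum.inr ek, Sum.inr ek' =>
      ek.1 = ek'.1 ∧ (ek.2.val + 1 = ek'.2.val ∨ ek'.2.val + 1 = ek.2.val)

/-- The gadget subdivision `T^g` of a graph `T` with parameter `ℓ`. -/
def gadget {α : Type*} [LinearOrder α] (T : SimpleGraph α) (ℓ : ℕ) :
    SimpleGraph (α ⊕ (↥T.edgeSet × Fin (2*ℓ+2))) where
  Adj := gadgetAdj T ℓ
  symm := by
    constructor
    rintro (u | ek) (v | ek') h
    · exact h.elim
    · exact h
    · exact h
    · exact ⟨h.1.symm, h.2.symm⟩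
  loopless := by
    constructor
    rintro (u | ek) h
    · exact h.elim
    · exact h.2.elim (fun h' => by omega) (fun h' => by omega)

/-- A simple graph with vertex set contained in `[n] = {1, …, n}` (modelled as `Fin n`):
a pair of a simple graph on `Fin n` and its vertex set, containing all endpoints of edges. -/
def GraphOn (n : ℕ) : Type :=
  { GV : SimpleGraph (Fin n) × Finset (Fin n) //
      ∀ u v, GV.1.Adj u v → u ∈ GV.2 ∧ v ∈ GV.2 }

instance (n : ℕ) : Fintype (GraphOn n) :=
  Subtype.fintype _

/-- The stability number of a graph with vertex set `⊆ [n]`: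
stable sets must consist of vertices of the graph. -/
def alphaOn {n : ℕ} (G : GraphOn n) : ℕ :=
  sSup { k | ∃ s : Finset (Fin n), s ⊆ G.val.2 ∧ IsStableSet G.val.1 s ∧ s.card = k }

/-- Probability of an event for a random family of graphs, where each graph with vertex
set `⊆ [n]` is included in the family independently with probability `p`. -/
def famProb (n : ℕ) (p : ℝ) (E : Finset (GraphOn n) → Prop) : ℝ :=
  ∑ 𝒢 : Finset (GraphOn n),
    if E 𝒢 then p ^ 𝒢.card * (1 - p) ^ (Fintype.card (GraphOn n) - 𝒢.card) else 0

end
/-- For a maximization problem `Π = (S, F, *)` with slack matrix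
`M(f,s) = f* − f(s)`, one has `xc(Π) ≤ rank₊(M)`. -/
theorem xc_le_slack_nnegRank {S F : Type*} [Fintype S] [Fintype F] [Nonempty S]
    (obj : F → S → ℝ) (guar : F → ℝ) (h : ∀ f s, obj f s ≤ guar f) :
    xcLP obj guar ≤ nnegRank (Matrix.of fun f s => guar f - obj f s) := by
  classical
  set M : Matrix F S ℝ := Matrix.of fun f s => guar f - obj f s with hM
  -- the defining set of nnegRank M is nonempty
  have hne : ∃ r, r ∈ { r : ℕ | ∃ (T : Matrix F (Fin r) ℝ) (U : Matrix (Fin r) S ℝ),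
      (∀ i j, 0 ≤ T i j) ∧ (∀ i j, 0 ≤ U i j) ∧ M = T * U } := by
    refine ⟨Fintype.card S, ?_⟩
    set e := Fintype.equivFin S
    refine ⟨fun f i => M f (e.symm i), fun i s => if e.symm i = s then 1 else 0,
      fun f i => by simp [hM]; linarith [h f (e.symm i)],
      fun i s => by positivity, ?_⟩
    ext f s
    erw [Matrix.mul_apply]
    rw [Finset.sum_eq_single (e s)]
    · simp
    · intro b _ hb
      have : ¬ e.symm b = s := by
        intro hb'; exact hb (by rw [← hb']; simp)
      simp [this]
    · simp
  have hmem := Nat.sInf_mem hne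
  set r := nnegRank M with hr
  obtain ⟨T, U, hT, hU, hTU⟩ := hmem
  refine Nat.sInf_le ?_
  -- build the LP formulation of size r
  refine ⟨r + 1, 1,
    (fun i j => if j = Fin.castSucc i then (-1 : ℝ) else 0),
    (fun _ => 0),
    (fun _ j => if j = Fin.last r then (1 : ℝ) else 0),
    (fun _ => 1),
    (fun s => Fin.snoc (fun i => U i s) 1),
    (fun f => Fin.snoc (fun i => -T f i) (guar f)), ?_, ?_, ?_⟩
  · intro s
    constructor
    · intro i
      simp only [Matrix.mulVec, dotProduct]
      rw [Finset.sum_eq_single (Fin.castSucc i)]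
      · simp [Fin.snoc]
        exact hU i s
      · intro b _ hb; simp [hb]
      · simp
    · funext j
      simp only [Matrix.mulVec, dotProduct]
      rw [Finset.sum_eq_single (Fin.last r)]
      · simp [Fin.snoc]
      · intro b _ hb; simp [hb]
      · simp
  · intro f s
    have hfs : guar f - obj f s = ∑ i, T f i * U i s := by
      have := congrFun (congrFun hTU f) s
      simpa [hM, Matrix.mul_apply] using this
    simp only [dotProduct, Fin.sum_univ_castSucc]
    simp [Fin.snoc]
    linarith [show guar f - obj f s = ∑ i : Fin r, T f i * U i s from hfs]
  · intro f y hle heq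
    have hlast : y (Fin.last r) = 1 := by
      have := congrFun heq 0
      simp only [Matrix.mulVec, dotProduct] at this
      rw [Finset.sum_eq_single (Fin.last r)] at this
      · simpa using this
      · intro b _ hb; simp [hb]
      · simp
    have hpos : ∀ i : Fin r, 0 ≤ y (Fin.castSucc i) := by
      intro i
      have := hle i
      simp only [Matrix.mulVec, dotProduct] at this
      rw [Finset.sum_eq_single (Fin.castSucc i)] at this
      · simp at this; linarith
      · intro b _ hb; simp [hb]
      · simp
    simp only [dotProduct, Fin.sum_univ_castSucc]
    simp [Fin.snoc, hlast]
    have : 0 ≤ ∑ i : Fin r, T f i * y (Fin.castSucc i) :=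
      Finset.sum_nonneg fun i _ => mul_nonneg (hT f i) (hpos i)
    linarith
end

section
/- Let n ≥ 1 and let M be any 2^n × 2^n matrix with nonnegative real entries, with rows and columns indexed by the subsets a, b of [n] = {1,…,n}, such that M(a,b) = 1 whenever a ∩ b = ∅ and M(a,b) = 0 whenever |a ∩ b| = 1 (the entries for |a ∩ b| ≥ 2 are arbitrary nonnegative reals). Then rank₊(M) ≥ (3/2)^n. -/
attribute [local instance] Classical.propDecidable

open Matrix Filter

section UdisjAux

open Finset

lemma udisj_inter_insert {n : ℕ} {i : Fin n} {a b : Finset (Fin n)}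
    (hia : i ∈ a) (hd : a.erase i ∩ b = ∅) : a ∩ insert i b = {i} := by
  have hd' : ∀ x, x ∉ a.erase i ∩ b := by
    intro x hx; rw [hd] at hx; exact notMem_empty x hx
  ext x
  simp only [mem_inter, mem_insert, mem_singleton]
  constructor
  · rintro ⟨hxa, (rfl | hxb)⟩
    · rfl
    · by_contra hxi
      exact hd' x (mem_inter.mpr ⟨mem_erase.mpr ⟨hxi, hxa⟩, hxb⟩)
  · rintro rfl
    exact ⟨hia, Or.inl rfl⟩

lemma udisj_rect_aux {n : ℕ} (s : Finset (Fin n)) :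
    ∀ (A B : Finset (Finset (Fin n))),
      (∀ a ∈ A, a ⊆ s) → (∀ b ∈ B, b ⊆ s) →
      (∀ a ∈ A, ∀ b ∈ B, (a ∩ b).card ≠ 1) →
      ((A ×ˢ B).filter fun p => p.1 ∩ p.2 = ∅).card ≤ 2 ^ s.card := by
  induction s using Finset.induction_on with
  | empty =>
    intro A B hA hB _
    have hsub : ((A ×ˢ B).filter fun p => p.1 ∩ p.2 = ∅) ⊆ {(∅, ∅)} := by
      intro p hp
      rw [mem_filter, mem_product] at hp
      have h1 : p.1 = ∅ := subset_empty.mp (hA _ hp.1.1)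
      have h2 : p.2 = ∅ := subset_empty.mp (hB _ hp.1.2)
      simp [Prod.ext_iff, h1, h2]
    calc ((A ×ˢ B).filter fun p => p.1 ∩ p.2 = ∅).card
        ≤ ({((∅ : Finset (Fin n)), (∅ : Finset (Fin n)))} : Finset _).card :=
          card_le_card hsub
      _ = 1 := card_singleton _
      _ ≤ 2 ^ (∅ : Finset (Fin n)).card := by simp
  | @insert i s hi IH =>
    intro A B hA hB h
    set A0 := A.filter (fun a => i ∉ a) with hA0
    set A1 := (A.filter (fun a => i ∈ a)).image (fun a => a.erase i) with hA1
    set B0 := B.filter (fun b => i ∉ b) with hB0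
    set B1 := (B.filter (fun b => i ∈ b)).image (fun b => b.erase i) with hB1
    have hA0mem : ∀ a ∈ A0, a ∈ A ∧ i ∉ a := by
      intro a ha; rw [hA0, mem_filter] at ha; exact ha
    have hB0mem : ∀ b ∈ B0, b ∈ B ∧ i ∉ b := by
      intro b hb; rw [hB0, mem_filter] at hb; exact hb
    have hA1mem : ∀ a ∈ A1, insert i a ∈ A ∧ i ∉ a := by
      intro a ha
      rw [hA1, mem_image] at ha
      obtain ⟨a0, ha0, rfl⟩ := ha
      rw [mem_filter] at ha0
      rw [Finset.insert_erase ha0.2]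
      exact ⟨ha0.1, notMem_erase _ _⟩
    have hB1mem : ∀ b ∈ B1, insert i b ∈ B ∧ i ∉ b := by
      intro b hb
      rw [hB1, mem_image] at hb
      obtain ⟨b0, hb0, rfl⟩ := hb
      rw [mem_filter] at hb0
      rw [Finset.insert_erase hb0.2]
      exact ⟨hb0.1, notMem_erase _ _⟩
    -- subset facts
    have subs : ∀ a : Finset (Fin n), a ⊆ insert i s → i ∉ a → a ⊆ s := by
      intro a hsub hia x hx
      rcases mem_insert.mp (hsub hx) with rfl | hxs
      · exact absurd hx hia
      · exact hxs
    have hA0s : ∀ a ∈ A0, a ⊆ s := fun a ha =>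
      subs a (hA a (hA0mem a ha).1) (hA0mem a ha).2
    have hB0s : ∀ b ∈ B0, b ⊆ s := fun b hb =>
      subs b (hB b (hB0mem b hb).1) (hB0mem b hb).2
    have hA1s : ∀ a ∈ A1, a ⊆ s := by
      intro a ha
      obtain ⟨haA, hia⟩ := hA1mem a ha
      intro x hx
      rcases mem_insert.mp (hA _ haA (mem_insert_of_mem hx)) with rfl | hxs
      · exact absurd hx hia
      · exact hxs
    have hB1s : ∀ b ∈ B1, b ⊆ s := by
      intro b hb
      obtain ⟨hbB, hib⟩ := hB1mem b hb
      intro x hx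
      rcases mem_insert.mp (hB _ hbB (mem_insert_of_mem hx)) with rfl | hxs
      · exact absurd hx hib
      · exact hxs
    -- intersection with insert, when i not in a
    have inter_ins : ∀ a b : Finset (Fin n), i ∉ a → a ∩ insert i b = a ∩ b := by
      intro a b hia
      ext x
      simp only [mem_inter, mem_insert]
      constructor
      · rintro ⟨hxa, (rfl | hxb)⟩
        · exact absurd hxa hia
        · exact ⟨hxa, hxb⟩
      · rintro ⟨hxa, hxb⟩; exact ⟨hxa, Or.inr hxb⟩
    -- condition facts
    have cond1 : ∀ a ∈ A0, ∀ b ∈ B0 ∪ B1, (a ∩ b).card ≠ 1 := by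
      intro a ha b hb
      rcases mem_union.mp hb with hb0 | hb1
      · exact h a (hA0mem a ha).1 b (hB0mem b hb0).1
      · have := h a (hA0mem a ha).1 (insert i b) (hB1mem b hb1).1
        rwa [inter_ins a b (hA0mem a ha).2] at this
    have cond2 : ∀ a ∈ A0 ∪ A1, ∀ b ∈ B0, (a ∩ b).card ≠ 1 := by
      intro a ha b hb
      rcases mem_union.mp ha with ha0 | ha1
      · exact h a (hA0mem a ha0).1 b (hB0mem b hb).1
      · have := h (insert i a) (hA1mem a ha1).1 b (hB0mem b hb).1
        rwa [inter_comm, inter_ins b a (hB0mem b hb).2, inter_comm] at this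
    have hE1 : ((A0 ×ˢ (B0 ∪ B1)).filter fun p => p.1 ∩ p.2 = ∅).card ≤ 2 ^ s.card :=
      IH A0 (B0 ∪ B1) hA0s
        (fun b hb => (mem_union.mp hb).elim (hB0s b) (hB1s b)) cond1
    have hE2 : (((A0 ∪ A1) ×ˢ B0).filter fun p => p.1 ∩ p.2 = ∅).card ≤ 2 ^ s.card :=
      IH (A0 ∪ A1) B0
        (fun a ha => (mem_union.mp ha).elim (hA0s a) (hA1s a)) hB0s cond2
    -- the injection
    set E1 := ((A0 ×ˢ (B0 ∪ B1)).filter fun p => p.1 ∩ p.2 = ∅) with hE1def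
    set E2 := (((A0 ∪ A1) ×ˢ B0).filter fun p => p.1 ∩ p.2 = ∅) with hE2def
    set D := ((A ×ˢ B).filter fun p => p.1 ∩ p.2 = ∅) with hDdef
    have hDmem : ∀ p ∈ D, p.1 ∈ A ∧ p.2 ∈ B ∧ p.1 ∩ p.2 = ∅ := by
      intro p hp
      rw [hDdef, mem_filter, mem_product] at hp
      exact ⟨hp.1.1, hp.1.2, hp.2⟩
    set f : Finset (Fin n) × Finset (Fin n) →
        (Finset (Fin n) × Finset (Fin n)) ⊕ (Finset (Fin n) × Finset (Fin n)) :=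
      fun p => if i ∈ p.2 then Sum.inl (p.1, p.2.erase i)
        else if i ∈ p.1 then Sum.inr (p.1.erase i, p.2)
        else if insert i p.2 ∈ B then Sum.inr p else Sum.inl p with hf
    have key : D.card ≤ E1.card + E2.card := by
      rw [← card_disjSum]
      apply card_le_card_of_injOn f
      · -- maps into
        intro p hp
        obtain ⟨hpA, hpB, hpd⟩ := hDmem p hp
        have hnotboth : ¬ (i ∈ p.1 ∧ i ∈ p.2) := by
          rintro ⟨h1, h2⟩
          have : i ∈ p.1 ∩ p.2 := mem_inter.mpr ⟨h1, h2⟩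
          rw [hpd] at this; exact notMem_empty i this
        by_cases hib : i ∈ p.2
        · have hia : i ∉ p.1 := fun hia => hnotboth ⟨hia, hib⟩
          rw [hf]; simp only [if_pos hib]
          rw [Finset.mem_coe, inl_mem_disjSum, hE1def, mem_filter, mem_product]
          refine ⟨⟨?_, ?_⟩, ?_⟩
          · rw [hA0, mem_filter]; exact ⟨hpA, hia⟩
          · apply mem_union_right
            rw [hB1, mem_image]
            exact ⟨p.2, mem_filter.mpr ⟨hpB, hib⟩, rfl⟩
          · have hss : p.1 ∩ p.2.erase i ⊆ p.1 ∩ p.2 :=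
              inter_subset_inter (Finset.Subset.refl _) (erase_subset _ _)
            rw [hpd] at hss
            exact subset_empty.mp hss
        · by_cases hia : i ∈ p.1
          · rw [hf]; simp only [if_neg hib, if_pos hia]
            rw [Finset.mem_coe, inr_mem_disjSum, hE2def, mem_filter, mem_product]
            refine ⟨⟨?_, ?_⟩, ?_⟩
            · apply mem_union_right
              rw [hA1, mem_image]
              exact ⟨p.1, mem_filter.mpr ⟨hpA, hia⟩, rfl⟩
            · rw [hB0, mem_filter]; exact ⟨hpB, hib⟩
            · have hss : p.1.erase i ∩ p.2 ⊆ p.1 ∩ p.2 :=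
                inter_subset_inter (erase_subset _ _) (Finset.Subset.refl _)
            
              rw [hpd] at hss
              exact subset_empty.mp hss
          · rw [hf]; simp only [if_neg hib, if_neg hia]
            by_cases hins : insert i p.2 ∈ B
            · simp only [if_pos hins]
              rw [Finset.mem_coe, inr_mem_disjSum, hE2def, mem_filter, mem_product]
              exact ⟨⟨mem_union_left _ (mem_filter.mpr ⟨hpA, hia⟩),
                mem_filter.mpr ⟨hpB, hib⟩⟩, hpd⟩
            · simp only [if_neg hins]
              rw [Finset.mem_coe, inl_mem_disjSum, hE1def, mem_filter, mem_product]
              exact ⟨⟨mem_filter.mpr ⟨hpA, hia⟩,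
                mem_union_left _ (mem_filter.mpr ⟨hpB, hib⟩)⟩, hpd⟩
      · -- injectivity
        intro p hp q hq heq
        simp only [Finset.mem_coe] at hp hq
        obtain ⟨hpA, hpB, hpd⟩ := hDmem p hp
        obtain ⟨hqA, hqB, hqd⟩ := hDmem q hq
        rw [hf] at heq
        by_cases hpb : i ∈ p.2 <;> by_cases hqb : i ∈ q.2
        · -- both case 01
          simp only [if_pos hpb, if_pos hqb, Sum.inl.injEq, Prod.mk.injEq] at heq
          have h2 : p.2 = q.2 := by
            rw [← Finset.insert_erase hpb, ← Finset.insert_erase hqb, heq.2]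
          exact Prod.ext heq.1 h2
        · by_cases hqa : i ∈ q.1
          · simp only [if_pos hpb, if_neg hqb, if_pos hqa] at heq
            exact absurd heq (by simp)
          · simp only [if_pos hpb, if_neg hqb, if_neg hqa] at heq
            by_cases hins : insert i q.2 ∈ B
            · simp only [if_pos hins] at heq
              exact absurd heq (by simp)
            · simp only [if_neg hins] at heq
              rw [Sum.inl.injEq, Prod.mk.injEq] at heq
              exfalso
              apply hins
              rw [← heq.2, Finset.insert_erase hpb]
              exact hpB
        · by_cases hpa : i ∈ p.1
          · simp only [if_neg hpb, if_pos hpa, if_pos hqb] at heq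
            exact absurd heq (by simp)
          · simp only [if_neg hpb, if_pos hqb, if_neg hpa] at heq
            by_cases hins : insert i p.2 ∈ B
            · simp only [if_pos hins] at heq
              exact absurd heq (by simp)
            · simp only [if_neg hins] at heq
              rw [Sum.inl.injEq, Prod.mk.injEq] at heq
              exfalso
              apply hins
              rw [heq.2, Finset.insert_erase hqb]
              exact hqB
        · by_cases hpa : i ∈ p.1 <;> by_cases hqa : i ∈ q.1
          · -- both case 10
            simp only [if_neg hpb, if_neg hqb, if_pos hpa, if_pos hqa,
              Sum.inr.injEq, Prod.mk.injEq] at heq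
            have h1 : p.1 = q.1 := by
              rw [← Finset.insert_erase hpa, ← Finset.insert_erase hqa, heq.1]
            exact Prod.ext h1 heq.2
          · -- p case 10, q case 00
            simp only [if_neg hpb, if_neg hqb, if_pos hpa, if_neg hqa] at heq
            by_cases hins : insert i q.2 ∈ B
            · simp only [if_pos hins] at heq
              rw [Sum.inr.injEq, Prod.mk.injEq] at heq
              exfalso
              -- q.1 = p.1.erase i, q.2 = p.2; key fact
              have hcard := h p.1 hpA (insert i q.2) hins
              apply hcard
              rw [← heq.2]
              rw [udisj_inter_insert hpa (by rw [heq.1, heq.2]; exact hqd)]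
              exact card_singleton i
            · simp only [if_neg hins] at heq
              exact absurd heq (by simp)
          · -- p case 00, q case 10
            simp only [if_neg hpb, if_neg hqb, if_neg hpa, if_pos hqa] at heq
            by_cases hins : insert i p.2 ∈ B
            · simp only [if_pos hins] at heq
              rw [Sum.inr.injEq, Prod.mk.injEq] at heq
              exfalso
              have hcard := h q.1 hqA (insert i p.2) hins
              apply hcard
              rw [heq.2]
              rw [udisj_inter_insert hqa (by rw [← heq.1, ← heq.2]; exact hpd)]
              exact card_singleton i
            · simp only [if_neg hins] at heq
              exact absurd heq (by simp)
          · -- both case 00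
            simp only [if_neg hpb, if_neg hqb, if_neg hpa, if_neg hqa] at heq
            by_cases hp3 : insert i p.2 ∈ B <;> by_cases hq3 : insert i q.2 ∈ B
            · simp only [if_pos hp3, if_pos hq3, Sum.inr.injEq] at heq
              exact heq
            · simp only [if_pos hp3, if_neg hq3] at heq
              exact absurd heq (by simp)
            · simp only [if_neg hp3, if_pos hq3] at heq
              exact absurd heq (by simp)
            · simp only [if_neg hp3, if_neg hq3, Sum.inl.injEq] at heq
              exact heq
    calc D.card ≤ E1.card + E2.card := key
      _ ≤ 2 ^ s.card + 2 ^ s.card := Nat.add_le_add hE1 hE2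
      _ = 2 ^ (insert i s).card := by
          rw [card_insert_of_notMem hi, pow_succ]
          ring

lemma udisj_card_disj_pairs (n : ℕ) :
    ((Finset.univ ×ˢ Finset.univ :
        Finset (Finset (Fin n) × Finset (Fin n))).filter
      fun p => p.1 ∩ p.2 = ∅).card = 3 ^ n := by
  have : ((Finset.univ ×ˢ Finset.univ :
        Finset (Finset (Fin n) × Finset (Fin n))).filter
      fun p => p.1 ∩ p.2 = ∅).card = (Finset.univ : Finset (Fin n → Fin 3)).card := by
    apply Finset.card_bij'
      (i := fun p _ => fun x => if x ∈ p.1 then (0 : Fin 3) else if x ∈ p.2 then 1 else 2)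
      (j := fun f _ => (Finset.univ.filter fun x => f x = 0,
                        Finset.univ.filter fun x => f x = 1))
    case hi =>
      intro p hp
      exact mem_univ _
    case hj =>
      intro f hf
      rw [mem_filter, mem_product]
      refine ⟨⟨mem_univ _, mem_univ _⟩, ?_⟩
      ext x
      simp only [mem_inter, mem_filter, mem_univ, true_and, notMem_empty, iff_false]
      rintro ⟨h0, h1⟩
      rw [h0] at h1
      exact absurd h1 (by decide)
    case left_inv =>
      intro p hp
      rw [mem_filter, mem_product] at hp
      have hdisj := hp.2
      have hnot : ∀ x, x ∈ p.1 → x ∉ p.2 := by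
        intro x hx1 hx2
        have : x ∈ p.1 ∩ p.2 := mem_inter.mpr ⟨hx1, hx2⟩
        rw [hdisj] at this
        exact notMem_empty x this
      apply Prod.ext
      · ext x
        simp only [mem_filter, mem_univ, true_and]
        by_cases hx1 : x ∈ p.1
        · simp [hx1]
        · by_cases hx2 : x ∈ p.2 <;> simp [hx1, hx2] <;> decide
      · ext x
        simp only [mem_filter, mem_univ, true_and]
        by_cases hx1 : x ∈ p.1
        · simp only [if_pos hx1]
          constructor
          · intro h01; exact absurd h01 (by decide)
          · intro hx2; exact absurd hx2 (hnot x hx1)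
        · by_cases hx2 : x ∈ p.2 <;> simp [hx1, hx2] <;> decide
    case right_inv =>
      intro f hf
      funext x
      simp only [mem_filter, mem_univ, true_and]
      by_cases h0 : f x = 0
      · simp [h0]
      · by_cases h1 : f x = 1
        · simp [h0, h1]
        · simp only [if_neg h0, if_neg h1]
          have := (f x).isLt
          symm
          rw [Fin.ext_iff] at h0 h1 ⊢
          simp only [Fin.val_zero, Fin.val_one] at h0 h1
          show (f x).val = 2
          omega
  rw [this, card_univ]
  simp [Fintype.card_fun]

end UdisjAux

open Finset

/-- Every nonnegative `2^n × 2^n` matrix, indexed by subsets `a, b` of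
`[n]`, with `M(a,b) = 1` whenever `a ∩ b = ∅` and `M(a,b) = 0` whenever `|a ∩ b| = 1`
(a completion of the unique disjointness matrix `UDISJ(n)`), satisfies
`rank₊(M) ≥ (3/2)^n`. -/
theorem udisj_nnegRank_lower_bound (n : ℕ) (hn : 1 ≤ n)
    (M : Matrix (Finset (Fin n)) (Finset (Fin n)) ℝ)
    (hpos : ∀ a b, 0 ≤ M a b)
    (h0 : ∀ a b, a ∩ b = ∅ → M a b = 1)
    (h1 : ∀ a b, (a ∩ b).card = 1 → M a b = 0) :
    ((3 : ℝ) / 2) ^ n ≤ (nnegRank M : ℝ) := by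
    classical
  -- the set of factorization sizes is nonempty
  have hcard : Fintype.card (Finset (Fin n)) = 2 ^ n := by simp
  obtain ⟨e⟩ : Nonempty (Finset (Fin n) ≃ Fin (2 ^ n)) :=
    ⟨Fintype.equivFinOfCardEq hcard⟩
  have hne : { r : ℕ | ∃ (T : Matrix (Finset (Fin n)) (Fin r) ℝ)
      (U : Matrix (Fin r) (Finset (Fin n)) ℝ),
      (∀ i j, 0 ≤ T i j) ∧ (∀ i j, 0 ≤ U i j) ∧ M = T * U }.Nonempty := by
    refine ⟨2 ^ n, fun a k => M a (e.symm k),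
      fun k b => if b = e.symm k then 1 else 0, ?_, ?_, ?_⟩
    · intro a k; exact hpos _ _
    · intro k b; dsimp only; split <;> norm_num
    · ext a b
      change M a b = ∑ k, M a (e.symm k) * (if b = e.symm k then (1 : ℝ) else 0)
      have hs := Fintype.sum_equiv e.symm
        (fun k => M a (e.symm k) * if b = e.symm k then 1 else 0)
        (fun c => M a c * if b = c then 1 else 0) (fun k => rfl)
      rw [hs]
      simp [mul_ite, Finset.sum_ite_eq]
  have hmem := Nat.sInf_mem hne
  set r := nnegRank M with hrdef
  have hreq : r = sInf { r : ℕ | ∃ (T : Matrix (Finset (Fin n)) (Fin r) ℝ)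
      (U : Matrix (Fin r) (Finset (Fin n)) ℝ),
      (∀ i j, 0 ≤ T i j) ∧ (∀ i j, 0 ≤ U i j) ∧ M = T * U } := rfl
  rw [← hreq] at hmem
  obtain ⟨T, U, hT, hU, hM⟩ := hmem
  -- the rectangles
  set Ak : Fin r → Finset (Finset (Fin n)) :=
    fun k => Finset.univ.filter (fun a => 0 < T a k) with hAk
  set Bk : Fin r → Finset (Finset (Fin n)) :=
    fun k => Finset.univ.filter (fun b => 0 < U k b) with hBk
  have hMsum : ∀ a b, M a b = ∑ k, T a k * U k b := by
    intro a b
    rw [hM, Matrix.mul_apply]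
  -- rectangle bound
  have hrect : ∀ k : Fin r,
      (((Ak k) ×ˢ (Bk k)).filter fun p => p.1 ∩ p.2 = ∅).card ≤ 2 ^ n := by
    intro k
    have hcond : ∀ a ∈ Ak k, ∀ b ∈ Bk k, (a ∩ b).card ≠ 1 := by
      intro a ha b hb hc
      have hTa : 0 < T a k := (mem_filter.mp ha).2
      have hUb : 0 < U k b := (mem_filter.mp hb).2
      have hsum : 0 < ∑ j, T a j * U j b :=
        Finset.sum_pos' (fun j _ => mul_nonneg (hT _ _) (hU _ _))
          ⟨k, Finset.mem_univ _, mul_pos hTa hUb⟩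
      have hz : M a b = 0 := h1 a b hc
      rw [hMsum a b] at hz
      rw [hz] at hsum
      exact lt_irrefl 0 hsum
    have := udisj_rect_aux (Finset.univ : Finset (Fin n)) (Ak k) (Bk k)
      (fun a _ => Finset.subset_univ a) (fun b _ => Finset.subset_univ b) hcond
    simpa using this
  -- covering
  have hcover : ((Finset.univ ×ˢ Finset.univ :
        Finset (Finset (Fin n) × Finset (Fin n))).filter
      fun p => p.1 ∩ p.2 = ∅) ⊆
      Finset.univ.biUnion (fun k : Fin r =>
        ((Ak k) ×ˢ (Bk k)).filter fun p => p.1 ∩ p.2 = ∅) := by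
    intro p hp
    rw [mem_filter] at hp
    have hone : M p.1 p.2 = 1 := h0 _ _ hp.2
    obtain ⟨k, hk⟩ : ∃ k, 0 < T p.1 k * U k p.2 := by
      by_contra hcon
      push_neg at hcon
      have hz : ∀ k, T p.1 k * U k p.2 = 0 := fun k =>
        le_antisymm (hcon k) (mul_nonneg (hT _ _) (hU _ _))
      have := hMsum p.1 p.2
      rw [hone] at this
      simp only [hz, Finset.sum_const_zero] at this
      norm_num at this
    have hTk : 0 < T p.1 k := by
      rcases mul_pos_iff.mp hk with ⟨h1', _⟩ | ⟨h1', _⟩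
      · exact h1'
      · exact absurd h1' (not_lt.mpr (hT _ _))
    have hUk : 0 < U k p.2 := by
      rcases mul_pos_iff.mp hk with ⟨_, h2'⟩ | ⟨h1', _⟩
      · exact h2'
      · exact absurd h1' (not_lt.mpr (hT _ _))
    rw [Finset.mem_biUnion]
    refine ⟨k, Finset.mem_univ _, ?_⟩
    rw [mem_filter, mem_product]
    exact ⟨⟨mem_filter.mpr ⟨Finset.mem_univ _, hTk⟩,
      mem_filter.mpr ⟨Finset.mem_univ _, hUk⟩⟩, hp.2⟩
  -- counting
  have hnat : 3 ^ n ≤ r * 2 ^ n := by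
    calc 3 ^ n
        = ((Finset.univ ×ˢ Finset.univ :
            Finset (Finset (Fin n) × Finset (Fin n))).filter
          fun p => p.1 ∩ p.2 = ∅).card := (udisj_card_disj_pairs n).symm
      _ ≤ (Finset.univ.biUnion (fun k : Fin r =>
            ((Ak k) ×ˢ (Bk k)).filter fun p => p.1 ∩ p.2 = ∅)).card :=
          Finset.card_le_card hcover
      _ ≤ ∑ k : Fin r, (((Ak k) ×ˢ (Bk k)).filter fun p => p.1 ∩ p.2 = ∅).card :=
          Finset.card_biUnion_le
      _ ≤ ∑ _k : Fin r, 2 ^ n := Finset.sum_le_sum (fun k _ => hrect k)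
      _ = r * 2 ^ n := by simp [mul_comm]
  have hreal : (3 : ℝ) ^ n ≤ (r : ℝ) * 2 ^ n := by exact_mod_cast hnat
  rw [div_pow, div_le_iff₀ (by positivity : (0 : ℝ) < 2 ^ n)]
  exact hreal
end

section
/- Let T be a finite simple graph and ℓ ≥ 0 an even integer, and let T^g denote the gadget subdivision of T with parameter ℓ. Then every nonempty induced subgraph of T^g has average degree at most 2 + 1/(ℓ+1). In particular, for ℓ = 0 every nonempty induced subgraph of T^g has average degree at most 3. -/
attribute [local instance] Classical.propDecidable

open Matrix Filter

section GadgetAuxDefs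

/-- Least missing internal index on the path of `e`, or `2ℓ+2` if all present. -/
noncomputable def gtmin {α : Type*} [LinearOrder α] (T : SimpleGraph α) (ℓ : ℕ)
    (s : Set (α ⊕ (↥T.edgeSet × Fin (2*ℓ+2)))) (e : ↥T.edgeSet) : ℕ :=
  sInf {u : ℕ | u = 2*ℓ+2 ∨ ∃ h : u < 2*ℓ+2, Sum.inr (e, (⟨u, h⟩ : Fin (2*ℓ+2))) ∉ s}

variable {α : Type*} [LinearOrder α] {T : SimpleGraph α} {ℓ : ℕ}
  {s : Set (α ⊕ (↥T.edgeSet × Fin (2*ℓ+2)))}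

lemma gtmin_le (e : ↥T.edgeSet) : gtmin T ℓ s e ≤ 2*ℓ+2 := by
  have hmem : (2*ℓ+2) ∈ {u : ℕ | u = 2*ℓ+2 ∨
      ∃ h : u < 2*ℓ+2, Sum.inr (e, (⟨u, h⟩ : Fin (2*ℓ+2))) ∉ s} := Or.inl rfl
  exact Nat.sInf_le hmem

lemma gtmin_mem_of_lt (e : ↥T.edgeSet) {k : ℕ} (hk : k < 2*ℓ+2)
    (h : k < gtmin T ℓ s e) : Sum.inr (e, (⟨k, hk⟩ : Fin (2*ℓ+2))) ∈ s := by
  by_contra hc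
  have hmem : k ∈ {u : ℕ | u = 2*ℓ+2 ∨
      ∃ h : u < 2*ℓ+2, Sum.inr (e, (⟨u, h⟩ : Fin (2*ℓ+2))) ∉ s} := Or.inr ⟨hk, hc⟩
  have h2 : gtmin T ℓ s e ≤ k := Nat.sInf_le hmem
  omega

lemma gtmin_not_mem (e : ↥T.edgeSet) (h : gtmin T ℓ s e < 2*ℓ+2) :
    Sum.inr (e, (⟨gtmin T ℓ s e, h⟩ : Fin (2*ℓ+2))) ∉ s := by
  have hne : {u : ℕ | u = 2*ℓ+2 ∨
      ∃ h : u < 2*ℓ+2, Sum.inr (e, (⟨u, h⟩ : Fin (2*ℓ+2))) ∉ s}.Nonempty :=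
    ⟨2*ℓ+2, Or.inl rfl⟩
  have hmem : gtmin T ℓ s e ∈ {u : ℕ | u = 2*ℓ+2 ∨
      ∃ h : u < 2*ℓ+2, Sum.inr (e, (⟨u, h⟩ : Fin (2*ℓ+2))) ∉ s} := Nat.sInf_mem hne
  rcases hmem with h1 | ⟨h2, h3⟩
  · omega
  · exact h3

lemma gtmin_ne (e : ↥T.edgeSet) (k : Fin (2*ℓ+2)) (hk : Sum.inr (e, k) ∈ s) :
    gtmin T ℓ s e ≠ k.val := by
  intro hc
  have h1 : gtmin T ℓ s e < 2*ℓ+2 := hc ▸ k.isLt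
  apply gtmin_not_mem e h1
  have hfe : (⟨gtmin T ℓ s e, h1⟩ : Fin (2*ℓ+2)) = k := Fin.ext hc
  rw [hfe]
  exact hk

lemma gtmin_full (e : ↥T.edgeSet) (h : gtmin T ℓ s e = 2*ℓ+2) (k : Fin (2*ℓ+2)) :
    Sum.inr (e, k) ∈ s := by
  have h2 : (k : ℕ) < gtmin T ℓ s e := by omega
  have := gtmin_mem_of_lt (s := s) e k.isLt h2
  simpa using this

end GadgetAuxDefs

section GadgetF

/-- index assigned to a boundary edge whose internal endpoint is `(e, k)`. -/
noncomputable def gB {α : Type*} [LinearOrder α] (T : SimpleGraph α) (ℓ : ℕ)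
    (s : Set (α ⊕ (↥T.edgeSet × Fin (2*ℓ+2)))) (ek : ↥T.edgeSet × Fin (2*ℓ+2)) :
    Fin (2*ℓ+3) :=
  if ek.2.val = 0 then ⟨0, by omega⟩
  else if gtmin T ℓ s ek.1 = 2*ℓ+2 then ⟨2*ℓ+2, by omega⟩ else ⟨2*ℓ+1, by omega⟩

/-- index assigned to a middle edge with internal endpoints of indices `k`, `k'`. -/
noncomputable def gM {α : Type*} [LinearOrder α] (T : SimpleGraph α) (ℓ : ℕ)
    (s : Set (α ⊕ (↥T.edgeSet × Fin (2*ℓ+2)))) (e : ↥T.edgeSet)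
    (k k' : Fin (2*ℓ+2)) : Fin (2*ℓ+3) :=
  if max k.val k'.val < gtmin T ℓ s e then ⟨max k.val k'.val, by omega⟩
  else ⟨max k.val k'.val - 1, by omega⟩

/-- label of an edge of the gadget. -/
noncomputable def gF {α : Type*} [LinearOrder α] (T : SimpleGraph α) (ℓ : ℕ)
    (s : Set (α ⊕ (↥T.edgeSet × Fin (2*ℓ+2)))) :
    (x y : α ⊕ (↥T.edgeSet × Fin (2*ℓ+2))) → gadgetAdj T ℓ x y →
      ↥T.edgeSet × Fin (2*ℓ+3)
  | Sum.inl _, Sum.inl _, h => h.elim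
  | Sum.inl _, Sum.inr ek, _ => (ek.1, gB T ℓ s ek)
  | Sum.inr ek, Sum.inl _, _ => (ek.1, gB T ℓ s ek)
  | Sum.inr ek, Sum.inr ek', _ => (ek.1, gM T ℓ s ek.1 ek.2 ek'.2)

end GadgetF



section GadgetCore

variable {α : Type*} [LinearOrder α] {T : SimpleGraph α} {ℓ : ℕ}
  {s : Set (α ⊕ (↥T.edgeSet × Fin (2*ℓ+2)))}

/-- The image property of edge labels. -/
def gP (T : SimpleGraph α) (ℓ : ℕ) (s : Set (α ⊕ (↥T.edgeSet × Fin (2*ℓ+2))))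
    (p : ↥T.edgeSet × Fin (2*ℓ+3)) : Prop :=
  (∃ hlt : p.2.val < 2*ℓ+2, Sum.inr (p.1, (⟨p.2.val, hlt⟩ : Fin (2*ℓ+2))) ∈ s) ∨
  (p.2.val = 2*ℓ+2 ∧ gtmin T ℓ s p.1 = 2*ℓ+2)

lemma gB_prop (ek : ↥T.edgeSet × Fin (2*ℓ+2)) (hmem : Sum.inr ek ∈ s)
    (hk : ek.2.val = 0 ∨ ek.2.val = 2*ℓ+1) : gP T ℓ s (ek.1, gB T ℓ s ek) := by
  unfold gP gB
  split_ifs with h0 ht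
  · left
    refine ⟨by simp only [Fin.val_mk]; omega, ?_⟩
    have : ((ek.1, (⟨0, by omega⟩ : Fin (2*ℓ+2))) : ↥T.edgeSet × Fin (2*ℓ+2)) = ek :=
      Prod.ext rfl (Fin.ext h0.symm)
    rw [this]
    exact hmem
  · right
    exact ⟨rfl, ht⟩
  · left
    refine ⟨by simp only [Fin.val_mk]; omega, ?_⟩
    have hk1 : ek.2.val = 2*ℓ+1 := by rcases hk with h | h <;> omega
    have : ((ek.1, (⟨2*ℓ+1, by omega⟩ : Fin (2*ℓ+2))) : ↥T.edgeSet × Fin (2*ℓ+2)) = ek :=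
      Prod.ext rfl (Fin.ext hk1.symm)
    rw [this]
    exact hmem

lemma gM_prop (e : ↥T.edgeSet) (k k' : Fin (2*ℓ+2))
    (hk : Sum.inr (e, k) ∈ s) (hk' : Sum.inr (e, k') ∈ s)
    (hadj : k.val + 1 = k'.val ∨ k'.val + 1 = k.val) :
    gP T ℓ s (e, gM T ℓ s e k k') := by
  have h1 := k.isLt
  have h2 := k'.isLt
  unfold gP gM
  split_ifs with hlt
  · left
    refine ⟨by simp only [Fin.val_mk]; omega, ?_⟩
    rcases hadj with h | h
    · have : (⟨max k.val k'.val, by omega⟩ : Fin (2*ℓ+2)) = k' := Fin.ext (by simp; omega)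
      rw [this]; exact hk'
    · have : (⟨max k.val k'.val, by omega⟩ : Fin (2*ℓ+2)) = k := Fin.ext (by simp; omega)
      rw [this]; exact hk
  · left
    refine ⟨by simp only [Fin.val_mk]; omega, ?_⟩
    rcases hadj with h | h
    · have : (⟨max k.val k'.val - 1, by omega⟩ : Fin (2*ℓ+2)) = k := Fin.ext (by simp; omega)
      rw [this]; exact hk
    · have : (⟨max k.val k'.val - 1, by omega⟩ : Fin (2*ℓ+2)) = k' := Fin.ext (by simp; omega)
      rw [this]; exact hk'

lemma gBB (ek ek' : ↥T.edgeSet × Fin (2*ℓ+2)) {u v : α}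
    (hu : (ek.2.val = 0 ∧ u = sym2Min ek.1.val) ∨ (ek.2.val = 2*ℓ+1 ∧ u = sym2Max ek.1.val))
    (hv : (ek'.2.val = 0 ∧ v = sym2Min ek'.1.val) ∨ (ek'.2.val = 2*ℓ+1 ∧ v = sym2Max ek'.1.val))
    (he : ek.1 = ek'.1) (hB : (gB T ℓ s ek).val = (gB T ℓ s ek').val) :
    u = v ∧ ek = ek' := by
  unfold gB at hB
  rcases hu with ⟨h1, h2⟩ | ⟨h1, h2⟩ <;> rcases hv with ⟨h3, h4⟩ | ⟨h3, h4⟩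
  · exact ⟨by rw [h2, h4, he], Prod.ext he (Fin.ext (by omega))⟩
  · exfalso; revert hB; split_ifs <;> (try simp only [Fin.val_mk]) <;> (try dsimp only) <;> intro <;> omega
  · exfalso; revert hB; split_ifs <;> (try simp only [Fin.val_mk]) <;> (try dsimp only) <;> intro <;> omega
  · refine ⟨by rw [h2, h4, he], Prod.ext he (Fin.ext (by omega))⟩

lemma gBM {e : ↥T.edgeSet} (k0 fk fk' : Fin (2*ℓ+2))
    (hk0 : k0.val = 0 ∨ k0.val = 2*ℓ+1)
    (hmem0 : Sum.inr (e, k0) ∈ s) (hmem1 : Sum.inr (e, fk) ∈ s)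
    (hmem2 : Sum.inr (e, fk') ∈ s)
    (madj : fk.val + 1 = fk'.val ∨ fk'.val + 1 = fk.val)
    (hval : (gB T ℓ s (e, k0)).val = (gM T ℓ s e fk fk').val) : False := by
  have ht := gtmin_le (s := s) e
  have hne0 := gtmin_ne e k0 hmem0
  have hne1 := gtmin_ne e fk hmem1
  have hne2 := gtmin_ne e fk' hmem2
  have hb0 := k0.isLt
  have hb1 := fk.isLt
  have hb2 := fk'.isLt
  unfold gB gM at hval
  try dsimp only at hval
  revert hval
  split_ifs <;> (try simp only [Fin.val_mk]) <;> omega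

lemma gMM {e : ↥T.edgeSet} (a b a' b' : Fin (2*ℓ+2))
    (h1 : Sum.inr (e, a) ∈ s) (h2 : Sum.inr (e, b) ∈ s)
    (h3 : Sum.inr (e, a') ∈ s) (h4 : Sum.inr (e, b') ∈ s)
    (m1 : a.val + 1 = b.val ∨ b.val + 1 = a.val)
    (m2 : a'.val + 1 = b'.val ∨ b'.val + 1 = a'.val)
    (hval : (gM T ℓ s e a b).val = (gM T ℓ s e a' b').val) :
    (a = a' ∧ b = b') ∨ (a = b' ∧ b = a') := by
  have ht := gtmin_le (s := s) e
  have hne1 := gtmin_ne e a h1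
  have hne2 := gtmin_ne e b h2
  have hne3 := gtmin_ne e a' h3
  have hne4 := gtmin_ne e b' h4
  have hb1 := a.isLt
  have hb2 := b.isLt
  have hb3 := a'.isLt
  have hb4 := b'.isLt
  have hvals : (a.val = a'.val ∧ b.val = b'.val) ∨ (a.val = b'.val ∧ b.val = a'.val) := by
    unfold gM at hval
    revert hval
    split_ifs <;> (try simp only [Fin.val_mk]) <;> (try dsimp only) <;> omega
  rcases hvals with ⟨ha, hb⟩ | ⟨ha, hb⟩
  · exact Or.inl ⟨Fin.ext ha, Fin.ext hb⟩
  · exact Or.inr ⟨Fin.ext ha, Fin.ext hb⟩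

end GadgetCore



section GadgetFLemmas

variable {α : Type*} [LinearOrder α] {T : SimpleGraph α} {ℓ : ℕ}
  {s : Set (α ⊕ (↥T.edgeSet × Fin (2*ℓ+2)))}

lemma gF_prop (x y : α ⊕ (↥T.edgeSet × Fin (2*ℓ+2))) (hx : x ∈ s) (hy : y ∈ s)
    (h : gadgetAdj T ℓ x y) : gP T ℓ s (gF T ℓ s x y h) := by
  rcases x with u | p <;> rcases y with v | q
  · exact h.elim
  · have h2 : (q.2.val = 0 ∧ u = sym2Min q.1.val) ∨
        (q.2.val = 2*ℓ+1 ∧ u = sym2Max q.1.val) := h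
    exact gB_prop q hy (h2.imp And.left And.left)
  · have h2 : (p.2.val = 0 ∧ v = sym2Min p.1.val) ∨
        (p.2.val = 2*ℓ+1 ∧ v = sym2Max p.1.val) := h
    exact gB_prop p hx (h2.imp And.left And.left)
  · have h2 : p.1 = q.1 ∧ (p.2.val + 1 = q.2.val ∨ q.2.val + 1 = p.2.val) := h
    have hy2 : Sum.inr (p.1, q.2) ∈ s := by rw [h2.1]; exact hy
    exact gM_prop (s := s) p.1 p.2 q.2 hx hy2 h2.2

lemma gF_inj (x y x' y' : α ⊕ (↥T.edgeSet × Fin (2*ℓ+2)))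
    (hx : x ∈ s) (hy : y ∈ s) (hx' : x' ∈ s) (hy' : y' ∈ s)
    (h : gadgetAdj T ℓ x y) (h' : gadgetAdj T ℓ x' y')
    (heq : gF T ℓ s x y h = gF T ℓ s x' y' h') :
    s(x, y) = s(x', y') := by
  rcases x with u | p <;> rcases y with v | q <;>
    rcases x' with u' | p' <;> rcases y' with v' | q'
  -- (inl, inl) first component cases: impossible
  case inl.inl.inl.inl => exact h.elim
  case inl.inl.inl.inr => exact h.elim
  case inl.inl.inr.inl => exact h.elim
  case inl.inl.inr.inr => exact h.elim
  case inl.inr.inl.inl => exact h'.elim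
  case inr.inl.inl.inl => exact h'.elim
  case inr.inr.inl.inl => exact h'.elim
  -- B vs B, positions (inl,inr) vs (inl,inr)
  case inl.inr.inl.inr =>
    have h2 : (q.2.val = 0 ∧ u = sym2Min q.1.val) ∨
        (q.2.val = 2*ℓ+1 ∧ u = sym2Max q.1.val) := h
    have h3 : (q'.2.val = 0 ∧ u' = sym2Min q'.1.val) ∨
        (q'.2.val = 2*ℓ+1 ∧ u' = sym2Max q'.1.val) := h'
    have heq' : ((q.1, gB T ℓ s q) : ↥T.edgeSet × Fin (2*ℓ+3)) = (q'.1, gB T ℓ s q') := heq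
    rw [Prod.mk.injEq] at heq'
    obtain ⟨huv, hpq⟩ := gBB q q' h2 h3 heq'.1 (congrArg Fin.val heq'.2)
    rw [huv, hpq]
  -- B vs B, positions (inl,inr) vs (inr,inl)
  case inl.inr.inr.inl =>
    have h2 : (q.2.val = 0 ∧ u = sym2Min q.1.val) ∨
        (q.2.val = 2*ℓ+1 ∧ u = sym2Max q.1.val) := h
    have h3 : (p'.2.val = 0 ∧ v' = sym2Min p'.1.val) ∨
        (p'.2.val = 2*ℓ+1 ∧ v' = sym2Max p'.1.val) := h'
    have heq' : ((q.1, gB T ℓ s q) : ↥T.edgeSet × Fin (2*ℓ+3)) = (p'.1, gB T ℓ s p') := heq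
    rw [Prod.mk.injEq] at heq'
    obtain ⟨huv, hpq⟩ := gBB q p' h2 h3 heq'.1 (congrArg Fin.val heq'.2)
    rw [huv, hpq]
    exact Sym2.eq_swap
  -- B vs M, (inl,inr) vs (inr,inr)
  case inl.inr.inr.inr =>
    exfalso
    have h2 : (q.2.val = 0 ∧ u = sym2Min q.1.val) ∨
        (q.2.val = 2*ℓ+1 ∧ u = sym2Max q.1.val) := h
    have h3 : p'.1 = q'.1 ∧ (p'.2.val + 1 = q'.2.val ∨ q'.2.val + 1 = p'.2.val) := h'
    have heq' : ((q.1, gB T ℓ s q) : ↥T.edgeSet × Fin (2*ℓ+3))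
        = (p'.1, gM T ℓ s p'.1 p'.2 q'.2) := heq
    rw [Prod.mk.injEq] at heq'
    obtain ⟨he, hB⟩ := heq'
    have hBv := congrArg Fin.val hB
    rw [← he] at hBv
    have hm1 : Sum.inr (q.1, p'.2) ∈ s := by rw [he]; exact hx'
    have hm2 : Sum.inr (q.1, q'.2) ∈ s := by rw [he, h3.1]; exact hy'
    exact gBM q.2 p'.2 q'.2 (h2.imp And.left And.left) hy hm1 hm2 h3.2 hBv
  -- B vs B, (inr,inl) vs (inl,inr)
  case inr.inl.inl.inr =>
    have h2 : (p.2.val = 0 ∧ v = sym2Min p.1.val) ∨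
        (p.2.val = 2*ℓ+1 ∧ v = sym2Max p.1.val) := h
    have h3 : (q'.2.val = 0 ∧ u' = sym2Min q'.1.val) ∨
        (q'.2.val = 2*ℓ+1 ∧ u' = sym2Max q'.1.val) := h'
    have heq' : ((p.1, gB T ℓ s p) : ↥T.edgeSet × Fin (2*ℓ+3)) = (q'.1, gB T ℓ s q') := heq
    rw [Prod.mk.injEq] at heq'
    obtain ⟨huv, hpq⟩ := gBB p q' h2 h3 heq'.1 (congrArg Fin.val heq'.2)
    rw [huv, hpq]
    exact Sym2.eq_swap
  -- B vs B, (inr,inl) vs (inr,inl)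
  case inr.inl.inr.inl =>
    have h2 : (p.2.val = 0 ∧ v = sym2Min p.1.val) ∨
        (p.2.val = 2*ℓ+1 ∧ v = sym2Max p.1.val) := h
    have h3 : (p'.2.val = 0 ∧ v' = sym2Min p'.1.val) ∨
        (p'.2.val = 2*ℓ+1 ∧ v' = sym2Max p'.1.val) := h'
    have heq' : ((p.1, gB T ℓ s p) : ↥T.edgeSet × Fin (2*ℓ+3)) = (p'.1, gB T ℓ s p') := heq
    rw [Prod.mk.injEq] at heq'
    obtain ⟨huv, hpq⟩ := gBB p p' h2 h3 heq'.1 (congrArg Fin.val heq'.2)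
    rw [huv, hpq]
  -- B vs M, (inr,inl) vs (inr,inr)
  case inr.inl.inr.inr =>
    exfalso
    have h2 : (p.2.val = 0 ∧ v = sym2Min p.1.val) ∨
        (p.2.val = 2*ℓ+1 ∧ v = sym2Max p.1.val) := h
    have h3 : p'.1 = q'.1 ∧ (p'.2.val + 1 = q'.2.val ∨ q'.2.val + 1 = p'.2.val) := h'
    have heq' : ((p.1, gB T ℓ s p) : ↥T.edgeSet × Fin (2*ℓ+3))
        = (p'.1, gM T ℓ s p'.1 p'.2 q'.2) := heq
    rw [Prod.mk.injEq] at heq'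
    obtain ⟨he, hB⟩ := heq'
    have hBv := congrArg Fin.val hB
    rw [← he] at hBv
    have hm1 : Sum.inr (p.1, p'.2) ∈ s := by rw [he]; exact hx'
    have hm2 : Sum.inr (p.1, q'.2) ∈ s := by rw [he, h3.1]; exact hy'
    exact gBM p.2 p'.2 q'.2 (h2.imp And.left And.left) hx hm1 hm2 h3.2 hBv
  -- M vs B, (inr,inr) vs (inl,inr)
  case inr.inr.inl.inr =>
    exfalso
    have h2 : p.1 = q.1 ∧ (p.2.val + 1 = q.2.val ∨ q.2.val + 1 = p.2.val) := h
    have h3 : (q'.2.val = 0 ∧ u' = sym2Min q'.1.val) ∨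
        (q'.2.val = 2*ℓ+1 ∧ u' = sym2Max q'.1.val) := h'
    have heq' : ((p.1, gM T ℓ s p.1 p.2 q.2) : ↥T.edgeSet × Fin (2*ℓ+3))
        = (q'.1, gB T ℓ s q') := heq
    rw [Prod.mk.injEq] at heq'
    obtain ⟨he, hB⟩ := heq'
    have hBv := (congrArg Fin.val hB).symm
    rw [he] at hBv
    have hm1 : Sum.inr (q'.1, p.2) ∈ s := by rw [← he]; exact hx
    have hm2 : Sum.inr (q'.1, q.2) ∈ s := by rw [← he, h2.1]; exact hy
    exact gBM q'.2 p.2 q.2 (h3.imp And.left And.left) hy' hm1 hm2 h2.2 hBv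
  -- M vs B, (inr,inr) vs (inr,inl)
  case inr.inr.inr.inl =>
    exfalso
    have h2 : p.1 = q.1 ∧ (p.2.val + 1 = q.2.val ∨ q.2.val + 1 = p.2.val) := h
    have h3 : (p'.2.val = 0 ∧ v' = sym2Min p'.1.val) ∨
        (p'.2.val = 2*ℓ+1 ∧ v' = sym2Max p'.1.val) := h'
    have heq' : ((p.1, gM T ℓ s p.1 p.2 q.2) : ↥T.edgeSet × Fin (2*ℓ+3))
        = (p'.1, gB T ℓ s p') := heq
    rw [Prod.mk.injEq] at heq'
    obtain ⟨he, hB⟩ := heq'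
    have hBv := (congrArg Fin.val hB).symm
    rw [he] at hBv
    have hm1 : Sum.inr (p'.1, p.2) ∈ s := by rw [← he]; exact hx
    have hm2 : Sum.inr (p'.1, q.2) ∈ s := by rw [← he, h2.1]; exact hy
    exact gBM p'.2 p.2 q.2 (h3.imp And.left And.left) hx' hm1 hm2 h2.2 hBv
  -- M vs M
  case inr.inr.inr.inr =>
    have h2 : p.1 = q.1 ∧ (p.2.val + 1 = q.2.val ∨ q.2.val + 1 = p.2.val) := h
    have h3 : p'.1 = q'.1 ∧ (p'.2.val + 1 = q'.2.val ∨ q'.2.val + 1 = p'.2.val) := h'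
    have heq' : ((p.1, gM T ℓ s p.1 p.2 q.2) : ↥T.edgeSet × Fin (2*ℓ+3))
        = (p'.1, gM T ℓ s p'.1 p'.2 q'.2) := heq
    rw [Prod.mk.injEq] at heq'
    obtain ⟨he, hB⟩ := heq'
    have hBv := congrArg Fin.val hB
    rw [← he] at hBv
    have hm1 : Sum.inr (p.1, q.2) ∈ s := by rw [h2.1]; exact hy
    have hm2 : Sum.inr (p.1, p'.2) ∈ s := by rw [he]; exact hx'
    have hm3 : Sum.inr (p.1, q'.2) ∈ s := by rw [he, h3.1]; exact hy'
    rcases gMM p.2 q.2 p'.2 q'.2 hx hm1 hm2 hm3 h2.2 h3.2 hBv with ⟨ha, hb⟩ | ⟨ha, hb⟩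
    · have hp : p = p' := Prod.ext he ha
      have hq : q = q' := Prod.ext (h2.1.symm.trans (he.trans h3.1)) hb
      rw [hp, hq]
    · have hp : p = q' := Prod.ext (he.trans h3.1) ha
      have hq : q = p' := Prod.ext (h2.1.symm.trans he) hb
      rw [hp, hq]
      exact Sym2.eq_swap

end GadgetFLemmas



section GadgetCount

attribute [local instance] Classical.propDecidable

variable {α : Type*} [LinearOrder α] {T : SimpleGraph α} {ℓ : ℕ}
  {s : Set (α ⊕ (↥T.edgeSet × Fin (2*ℓ+2)))}

lemma gPerPath (e : ↥T.edgeSet) :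
    (2*ℓ+2) * (Finset.univ.filter (fun k : Fin (2*ℓ+3) => gP T ℓ s (e, k))).card
      ≤ (2*ℓ+3) * (Finset.univ.filter (fun k : Fin (2*ℓ+2) => Sum.inr (e, k) ∈ s)).card := by
  set Ie := Finset.univ.filter (fun k : Fin (2*ℓ+2) => Sum.inr (e, k) ∈ s) with hIe
  set Ae := Finset.univ.filter (fun k : Fin (2*ℓ+3) => gP T ℓ s (e, k)) with hAe
  rcases eq_or_ne (gtmin T ℓ s e) (2*ℓ+2) with ht | ht
  · have hIe_card : Ie.card = 2*ℓ+2 := by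
      rw [hIe, Finset.filter_true_of_mem (fun k _ => gtmin_full e ht k)]
      simp
    have hAe_card : Ae.card ≤ 2*ℓ+3 := by
      have := Finset.card_filter_le (Finset.univ : Finset (Fin (2*ℓ+3)))
        (fun k => gP T ℓ s (e, k))
      simpa [hAe] using this
    rw [hIe_card]
    calc (2*ℓ+2) * Ae.card ≤ (2*ℓ+2) * (2*ℓ+3) := Nat.mul_le_mul_left _ hAe_card
      _ = (2*ℓ+3) * (2*ℓ+2) := Nat.mul_comm _ _
  · have hle : Ae.card ≤ Ie.card := by
      have hmem : ∀ k ∈ Ae, ∃ hlt : k.val < 2*ℓ+2,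
          Sum.inr (e, (⟨k.val, hlt⟩ : Fin (2*ℓ+2))) ∈ s := by
        intro k hk
        rw [hAe, Finset.mem_filter] at hk
        rcases hk.2 with ⟨h5, h6⟩ | ⟨h5, h6⟩
        · exact ⟨h5, h6⟩
        · exact absurd h6 ht
      apply Finset.card_le_card_of_injOn (fun k : Fin (2*ℓ+3) =>
          if h : k.val < 2*ℓ+2 then (⟨k.val, h⟩ : Fin (2*ℓ+2)) else ⟨0, by omega⟩)
      · intro k hk
        obtain ⟨hlt, hmm⟩ := hmem k hk
        rw [Finset.mem_coe, hIe, Finset.mem_filter]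
        refine ⟨Finset.mem_univ _, ?_⟩
        simp only [dif_pos hlt]
        exact hmm
      · intro a ha b hb hab
        obtain ⟨ha', _⟩ := hmem a (Finset.mem_coe.mp ha)
        obtain ⟨hb', _⟩ := hmem b (Finset.mem_coe.mp hb)
        dsimp only at hab
        rw [dif_pos ha', dif_pos hb'] at hab
        exact Fin.ext (by simpa using hab)
    calc (2*ℓ+2) * Ae.card ≤ (2*ℓ+2) * Ie.card := Nat.mul_le_mul_left _ hle
      _ ≤ (2*ℓ+3) * Ie.card := Nat.mul_le_mul_right _ (by omega)

end GadgetCount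


/-- For a finite graph `T` and an even `ℓ ≥ 0`, every nonempty induced
subgraph of the gadget subdivision `T^g` has average degree at most `2 + 1/(ℓ+1)`;
in particular, for `ℓ = 0` the average degree is at most `3`. -/
theorem gadget_induced_avg_degree_le {α : Type*} [Fintype α] [LinearOrder α]
    (T : SimpleGraph α) (ℓ : ℕ) (hℓ : Even ℓ)
    (s : Set (α ⊕ (↥T.edgeSet × Fin (2*ℓ+2)))) (hs : s.Nonempty) :
    2 * (Nat.card ((gadget T ℓ).induce s).edgeSet : ℝ) / (Nat.card s : ℝ)
        ≤ 2 + 1 / ((ℓ : ℝ) + 1) ∧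
    (ℓ = 0 →
      2 * (Nat.card ((gadget T ℓ).induce s).edgeSet : ℝ) / (Nat.card s : ℝ) ≤ 3) := by
  classical
  letI : Fintype ↥T.edgeSet := Fintype.ofFinite _
  letI : Fintype ↥s := Fintype.ofFinite _
  letI : Fintype ↥((gadget T ℓ).induce s).edgeSet := Fintype.ofFinite _
  -- step 1: the key natural-number counting inequality
  have key : (2*ℓ+2) * Nat.card ((gadget T ℓ).induce s).edgeSet
      ≤ (2*ℓ+3) * Nat.card s := by
    -- choose representatives of edges
    have exrep : ∀ q : ((gadget T ℓ).induce s).edgeSet,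
        ∃ x y : ↥s, ((gadget T ℓ).induce s).Adj x y ∧ q.val = s(x, y) := by
      rintro ⟨q, hq⟩
      revert hq
      induction q using Sym2.ind with
      | _ x y =>
        intro hq
        exact ⟨x, y, (SimpleGraph.mem_edgeSet _).mp hq, rfl⟩
    choose fx fy hadj hrep using exrep
    have hadj' : ∀ q, gadgetAdj T ℓ ((fx q : ↥s) : α ⊕ (↥T.edgeSet × Fin (2*ℓ+2)))
        ((fy q : ↥s) : α ⊕ (↥T.edgeSet × Fin (2*ℓ+2))) := fun q => hadj q
    set Φ : ((gadget T ℓ).induce s).edgeSet → ↥T.edgeSet × Fin (2*ℓ+3) :=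
      fun q => gF T ℓ s _ _ (hadj' q) with hΦ
    have hΦinj : Function.Injective Φ := by
      intro q q' hqq
      have h2 := gF_inj _ _ _ _ (fx q).2 (fy q).2 (fx q').2 (fy q').2
        (hadj' q) (hadj' q') hqq
      apply Subtype.ext
      rw [hrep q, hrep q']
      rw [Sym2.eq_iff] at h2 ⊢
      rcases h2 with ⟨ha, hb⟩ | ⟨ha, hb⟩
      · exact Or.inl ⟨Subtype.ext ha, Subtype.ext hb⟩
      · exact Or.inr ⟨Subtype.ext ha, Subtype.ext hb⟩
    have hΦmem : ∀ q, gP T ℓ s (Φ q) :=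
      fun q => gF_prop _ _ (fx q).2 (fy q).2 (hadj' q)
    set A : Finset (↥T.edgeSet × Fin (2*ℓ+3)) :=
      Finset.univ.filter (fun pr => gP T ℓ s pr) with hA
    set I : Finset (↥T.edgeSet × Fin (2*ℓ+2)) :=
      Finset.univ.filter (fun pr => Sum.inr pr ∈ s) with hI
    -- |E| ≤ |A|
    have h1 : Nat.card ((gadget T ℓ).induce s).edgeSet ≤ A.card := by
      rw [Nat.card_eq_fintype_card]
      have hinj2 : Function.Injective
          (fun q : ((gadget T ℓ).induce s).edgeSet =>
            (⟨Φ q, by rw [hA, Finset.mem_filter]; exact ⟨Finset.mem_univ _, hΦmem q⟩⟩ :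
              {x // x ∈ A})) := by
        intro a b hab
        exact hΦinj (congrArg Subtype.val hab)
      calc Fintype.card ((gadget T ℓ).induce s).edgeSet
          ≤ Fintype.card {x // x ∈ A} := Fintype.card_le_of_injective _ hinj2
        _ = A.card := Fintype.card_coe A
    -- (2ℓ+2)|A| ≤ (2ℓ+3)|I|
    have h2 : (2*ℓ+2) * A.card ≤ (2*ℓ+3) * I.card := by
      have hAcard : A.card = ∑ e : ↥T.edgeSet,
          (Finset.univ.filter (fun k : Fin (2*ℓ+3) => gP T ℓ s (e, k))).card := by
        rw [hA, Finset.card_filter, Fintype.sum_prod_type]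
        exact Finset.sum_congr rfl fun e _ => (Finset.card_filter _ _).symm
      have hIcard : I.card = ∑ e : ↥T.edgeSet,
          (Finset.univ.filter (fun k : Fin (2*ℓ+2) => Sum.inr (e, k) ∈ s)).card := by
        rw [hI, Finset.card_filter, Fintype.sum_prod_type]
        exact Finset.sum_congr rfl fun e _ => (Finset.card_filter _ _).symm
      rw [hAcard, hIcard, Finset.mul_sum, Finset.mul_sum]
      exact Finset.sum_le_sum fun e _ => gPerPath e
    -- |I| ≤ |s|
    have h3 : I.card ≤ Nat.card s := by
      rw [Nat.card_coe_set_eq, Set.ncard_eq_toFinset_card']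
      apply Finset.card_le_card_of_injOn (fun pr => Sum.inr pr)
      · intro pr hpr
        rw [Finset.mem_coe, hI, Finset.mem_filter] at hpr
        rw [Finset.mem_coe, Set.mem_toFinset]
        exact hpr.2
      · intro a _ b _ hab
        simpa using hab
    calc (2*ℓ+2) * Nat.card ((gadget T ℓ).induce s).edgeSet
        ≤ (2*ℓ+2) * A.card := Nat.mul_le_mul_left _ h1
      _ ≤ (2*ℓ+3) * I.card := h2
      _ ≤ (2*ℓ+3) * Nat.card s := Nat.mul_le_mul_left _ h3
  -- step 2: real arithmetic
  have hnpos : 0 < Nat.card s := by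
    haveI := hs.to_subtype
    exact Nat.card_pos
  have hn : (0:ℝ) < (Nat.card s : ℝ) := by exact_mod_cast hnpos
  have hl1 : (0:ℝ) < (ℓ:ℝ) + 1 := by positivity
  have hkey : ((2*ℓ+2 : ℕ) : ℝ) * (Nat.card ((gadget T ℓ).induce s).edgeSet : ℝ)
      ≤ ((2*ℓ+3 : ℕ) : ℝ) * (Nat.card s : ℝ) := by exact_mod_cast key
  push_cast at hkey
  have main : 2 * (Nat.card ((gadget T ℓ).induce s).edgeSet : ℝ) / (Nat.card s : ℝ)
      ≤ 2 + 1 / ((ℓ : ℝ) + 1) := by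
    rw [div_le_iff₀ hn]
    have hrw : (2 + 1 / ((ℓ:ℝ) + 1)) * (Nat.card s : ℝ)
        = ((2*(ℓ:ℝ)+3) * (Nat.card s : ℝ)) / ((ℓ:ℝ)+1) := by
      rw [eq_div_iff hl1.ne']
      field_simp
      try ring
      try tauto
    rw [hrw, le_div_iff₀ hl1]
    nlinarith [hkey, hn.le]
  refine ⟨main, fun h0 => ?_⟩
  subst h0
  refine main.trans ?_
  norm_num
end

section
/- There exist constants c₁, c₂ > 0 and an integer n₀ such that for every n ≥ n₀ and every p with 0 < p ≤ 1/2, the Erdős–Rényi random graph G = G(n,p) satisfies P[ xc(STAB(G)) ≥ 2^{c₁·(ln n)²/p} ] ≤ n^{−c₂·(ln n)/p}. -/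
attribute [local instance] Classical.propDecidable

open Matrix Filter

-- ===== auxiliary lemmas =====

lemma stable_subset {V : Type*} {G : SimpleGraph V} {s t : Finset V}
    (hs : IsStableSet G s) (h : t ⊆ s) : IsStableSet G t :=
  fun u hu v hv => hs u (h hu) v (h hv)

-- L2
lemma card_inter_le_stabNum {V : Type*} [Fintype V] {G : SimpleGraph V} {s : Finset V}
    (hs : IsStableSet G s) (a : Finset V) :
    (s ∩ a).card ≤ stabNum (G.induce (↑a : Set V)) := by
  classical
  have hb : BddAbove { k | ∃ t : Finset ↥(↑a : Set V),
      IsStableSet (G.induce (↑a : Set V)) t ∧ t.card = k } := by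
    refine ⟨Fintype.card ↥(↑a : Set V), ?_⟩
    rintro k ⟨t, -, rfl⟩
    exact Finset.card_le_univ t
  refine le_csSup hb ?_
  refine ⟨(s ∩ a).attach.map ⟨fun x => ⟨x.1, by
      have := x.2; simp only [Finset.mem_inter] at this
      simpa using this.2⟩, ?_⟩, ?_, ?_⟩
  · intro x y hxy
    apply Subtype.ext
    simpa using congrArg Subtype.val hxy
  · rintro ⟨u, hu⟩ hut ⟨v, hv⟩ hvt hadj
    simp only [Finset.mem_map, Finset.mem_attach, true_and, Subtype.exists,
      Function.Embedding.coeFn_mk] at hut hvt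
    obtain ⟨u', hu', hu'e⟩ := hut
    obtain ⟨v', hv', hv'e⟩ := hvt
    have hu'' : u' ∈ s := (Finset.mem_inter.1 hu').1
    have hv'' : v' ∈ s := (Finset.mem_inter.1 hv').1
    have : G.Adj u v := hadj
    have heq1 : u' = u := congrArg Subtype.val hu'e
    have heq2 : v' = v := congrArg Subtype.val hv'e
    exact hs u' hu'' v' hv'' (by rw [heq1, heq2]; exact this)
  · simp

-- L3
lemma xcSTAB_le_card {V : Type*} [Fintype V] (G : SimpleGraph V) :
    xcSTAB G ≤ Fintype.card {s : Finset V // IsStableSet G s} := by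
  classical
  set N := Fintype.card {s : Finset V // IsStableSet G s} with hN
  apply Nat.sInf_le
  let e : Fin N ≃ {s : Finset V // IsStableSet G s} := (Fintype.equivFin _).symm
  refine ⟨N, 1, -(1 : Matrix (Fin N) (Fin N) ℝ), 0, Matrix.of fun _ _ => 1, fun _ => 1,
    fun s j => if e j = s then 1 else 0, fun a j => (((e j).1 ∩ a).card : ℝ), ?_, ?_, ?_⟩
  · intro s
    constructor
    · intro i
      simp [Matrix.neg_mulVec, Matrix.one_mulVec]
      positivity
    · funext i
      simp only [Matrix.mulVec, dotProduct, Matrix.of_apply, one_mul]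
      have : ∀ j : Fin N, (e j = s) = (j = e.symm s) := by
        intro j; simp [Equiv.eq_symm_apply, eq_comm]
      simp only [this]
      rw [Finset.sum_ite_eq' Finset.univ (e.symm s) (fun _ => (1:ℝ))]
      simp
  · intro a s
    simp only [dotProduct]
    rw [Finset.sum_eq_single (e.symm s)]
    · simp
    · intro j _ hj
      have : e j ≠ s := fun h => hj (by simp [← h])
      simp [this]
    · simp
  · intro a y hy1 hy2
    have hynn : ∀ j, 0 ≤ y j := by
      intro j
      have := hy1 j
      simpa [Matrix.neg_mulVec, Matrix.one_mulVec] using this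
    have hsum : ∑ j, y j = 1 := by
      have := congrFun hy2 0
      simpa [Matrix.mulVec, dotProduct] using this
    calc (fun j => (((e j).1 ∩ a).card : ℝ)) ⬝ᵥ y
        ≤ ∑ j, (stabNum (G.induce (↑a : Set V)) : ℝ) * y j := by
          apply Finset.sum_le_sum
          intro j _
          apply mul_le_mul_of_nonneg_right _ (hynn j)
          show (((e j).1 ∩ a).card : ℝ) ≤ _
          exact_mod_cast card_inter_le_stabNum (e j).2 a
      _ = (stabNum (G.induce (↑a : Set V)) : ℝ) := by
          rw [← Finset.mul_sum, hsum, mul_one]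



-- geometric bound
lemma sum_pow_lt {n : ℕ} (hn : 2 ≤ n) (k : ℕ) : ∑ i ∈ Finset.range k, n ^ i ≤ n ^ k := by
  induction k with
  | zero => simp
  | succ k ih =>
      rw [Finset.sum_range_succ, pow_succ]
      have : n ^ k * 2 ≤ n ^ k * n := by
        apply Nat.mul_le_mul_left _ hn
      omega

lemma card_small_subsets {α : Type*} [Fintype α] [DecidableEq α] {n k : ℕ}
    (hn : Fintype.card α = n) (h2 : 2 ≤ n) :
    (Finset.univ.filter (fun s : Finset α => s.card < k)).card ≤ n ^ k := by
  classical
  have hsplit : (Finset.univ.filter (fun s : Finset α => s.card < k))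
      = (Finset.range k).biUnion (fun i => Finset.univ.filter (fun s : Finset α => s.card = i)) := by
    ext s
    simp [Finset.mem_biUnion]
  rw [hsplit, Finset.card_biUnion]
  · calc ∑ i ∈ Finset.range k, (Finset.univ.filter (fun s : Finset α => s.card = i)).card
        ≤ ∑ i ∈ Finset.range k, n ^ i := by
          apply Finset.sum_le_sum
          intro i _
          have : Finset.univ.filter (fun s : Finset α => s.card = i)
              = Finset.powersetCard i (Finset.univ : Finset α) := by
            rw [Finset.powersetCard_eq_filter]
            ext s; simp
          rw [this, Finset.card_powersetCard, Finset.card_univ, hn]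
          exact Nat.choose_le_pow n i
      _ ≤ n ^ k := sum_pow_lt h2 k
  · intro i _ j _ hij
    simp only [Finset.disjoint_left, Finset.mem_filter]
    rintro s ⟨-, rfl⟩ ⟨-, h⟩
    exact hij h

noncomputable def allPairs (n : ℕ) : Finset (Sym2 (Fin n)) :=
  Finset.univ.filter (fun e => ¬ e.IsDiag)

lemma card_allPairs (n : ℕ) : (allPairs n).card = n.choose 2 := by
  classical
  rw [allPairs]
  rw [← Fintype.card_subtype]
  rw [Sym2.card_subtype_not_diag, Fintype.card_fin]

lemma edgeFinset_mem (n : ℕ) (G : SimpleGraph (Fin n)) :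
    G.edgeFinset ∈ (allPairs n).powerset := by
  rw [Finset.mem_powerset]
  intro e he
  simp only [allPairs, Finset.mem_filter, Finset.mem_univ, true_and]
  exact SimpleGraph.not_isDiag_of_mem_edgeFinset he

lemma fromEdgeSet_coe_edgeFinset (n : ℕ) (G : SimpleGraph (Fin n)) :
    SimpleGraph.fromEdgeSet ↑G.edgeFinset = G := by
  rw [SimpleGraph.coe_edgeFinset, SimpleGraph.fromEdgeSet_edgeSet]

lemma edgeFinset_fromEdgeSet (n : ℕ) (s : Finset (Sym2 (Fin n)))
    {inst : Fintype (SimpleGraph.fromEdgeSet (↑s : Set (Sym2 (Fin n)))).edgeSet}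
    (hs : s ∈ (allPairs n).powerset) :
    @SimpleGraph.edgeFinset _ (SimpleGraph.fromEdgeSet (↑s : Set (Sym2 (Fin n)))) inst = s := by
  have h : (SimpleGraph.fromEdgeSet (↑s : Set (Sym2 (Fin n)))).edgeSet = ↑s := by
    rw [SimpleGraph.edgeSet_fromEdgeSet]
    rw [sdiff_eq_left.2]
    rw [Finset.mem_powerset] at hs
    rw [Set.disjoint_left]
    intro e hes hed
    have := hs hes
    simp only [allPairs, Finset.mem_filter] at this
    exact this.2 hed
  ext e
  rw [SimpleGraph.mem_edgeFinset, h]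
  simp

lemma ncard_edges (n : ℕ) (G : SimpleGraph (Fin n)) :
    Nat.card G.edgeSet = G.edgeFinset.card := by
  rw [Nat.card_eq_fintype_card, SimpleGraph.edgeFinset, Set.toFinset_card]

lemma erProb_eq (n : ℕ) (p : ℝ) (E : SimpleGraph (Fin n) → Prop) :
    erProb n p E = ∑ s ∈ (allPairs n).powerset,
      if E (SimpleGraph.fromEdgeSet ↑s) then
        p ^ s.card * (1 - p) ^ ((allPairs n).card - s.card) else 0 := by
  rw [erProb]
  refine Finset.sum_nbij' (fun G => G.edgeFinset)
    (fun s => SimpleGraph.fromEdgeSet ↑s) (fun G _ => edgeFinset_mem n G)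
    (fun s _ => Finset.mem_univ _) ?_ ?_ ?_
  · intro G _; exact fromEdgeSet_coe_edgeFinset n G
  · intro s hs; exact edgeFinset_fromEdgeSet n s hs
  · intro G _
    rw [fromEdgeSet_coe_edgeFinset n G, ncard_edges, card_allPairs]

lemma erProb_mono (n : ℕ) {p : ℝ} (hp0 : 0 ≤ p) (hp1 : p ≤ 1)
    {E E' : SimpleGraph (Fin n) → Prop} (h : ∀ G, E G → E' G) :
    erProb n p E ≤ erProb n p E' := by
  apply Finset.sum_le_sum
  intro G _
  by_cases hG : E G
  · rw [if_pos hG, if_pos (h G hG)]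
  · rw [if_neg hG]
    by_cases hG' : E' G
    · rw [if_pos hG']
      have : 0 ≤ 1 - p := by linarith
      positivity
    · rw [if_neg hG']

lemma erProb_union_bound (n : ℕ) {p : ℝ} (hp0 : 0 ≤ p) (hp1 : p ≤ 1)
    {ι : Type*} (T : Finset ι) (Q : ι → SimpleGraph (Fin n) → Prop) :
    erProb n p (fun G => ∃ S ∈ T, Q S G) ≤ ∑ S ∈ T, erProb n p (Q S) := by
  unfold erProb
  rw [Finset.sum_comm]
  apply Finset.sum_le_sum
  intro G _
  have hw : 0 ≤ p ^ Nat.card G.edgeSet * (1 - p) ^ (n.choose 2 - Nat.card G.edgeSet) := by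
    have : 0 ≤ 1 - p := by linarith
    positivity
  have hnn : ∀ S ∈ T, (0:ℝ) ≤ (fun S => if Q S G then
      p ^ Nat.card G.edgeSet * (1 - p) ^ (n.choose 2 - Nat.card G.edgeSet) else 0) S := by
    intro S _
    dsimp only
    split
    · exact hw
    · exact le_refl 0
  by_cases h : ∃ S ∈ T, Q S G
  · rw [if_pos h]
    obtain ⟨S₀, hS₀T, hS₀⟩ := h
    have := Finset.single_le_sum hnn hS₀T
    simp only [if_pos hS₀] at this
    exact this
  · rw [if_neg h]
    exact Finset.sum_nonneg hnn

noncomputable def insidePairs (n : ℕ) (S : Finset (Fin n)) : Finset (Sym2 (Fin n)) :=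
  (allPairs n).filter (fun e => ∀ x ∈ e, x ∈ S)

lemma insidePairs_card (n : ℕ) (S : Finset (Fin n)) :
    (insidePairs n S).card = S.card.choose 2 := by
  classical
  have himg : insidePairs n S =
      (Finset.univ.filter (fun e : Sym2 {x // x ∈ S} => ¬ e.IsDiag)).image
        (Sym2.map Subtype.val) := by
    ext e
    simp only [insidePairs, allPairs, Finset.mem_filter, Finset.mem_univ, true_and,
      Finset.mem_image]
    constructor
    · rintro ⟨hnd, hmem⟩
      induction e with
      | _ u v =>
        refine ⟨s(⟨u, hmem u (by simp)⟩, ⟨v, hmem v (by simp)⟩), ?_, rfl⟩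
        intro hd
        apply hnd
        rw [Sym2.mk_isDiag_iff] at hd ⊢
        exact congrArg Subtype.val hd
    · rintro ⟨e', hnd, rfl⟩
      constructor
      · rw [Sym2.isDiag_map Subtype.val_injective]
        exact hnd
      · intro x hx
        rw [Sym2.mem_map] at hx
        obtain ⟨y, _, rfl⟩ := hx
        exact y.2
  rw [himg, Finset.card_image_of_injective _ (Sym2.map.injective Subtype.val_injective)]
  rw [← Fintype.card_subtype, Sym2.card_subtype_not_diag, Fintype.card_coe]

lemma erProb_stable_le (n : ℕ) {p : ℝ} (hp0 : 0 ≤ p) (hp1 : p ≤ 1) (S : Finset (Fin n)) :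
    erProb n p (fun G => IsStableSet G S) ≤ (1 - p) ^ (S.card.choose 2) := by
  classical
  have hq0 : (0:ℝ) ≤ 1 - p := by linarith
  rw [erProb_eq]
  set A := allPairs n with hA
  set B := insidePairs n S with hB
  have hBA : B ⊆ A := Finset.filter_subset _ _
  have step1 : ∑ s ∈ A.powerset,
      (if IsStableSet (SimpleGraph.fromEdgeSet ↑s) S then
        p ^ s.card * (1 - p) ^ (A.card - s.card) else 0)
      ≤ ∑ s ∈ A.powerset,
      (if s ⊆ A \ B then p ^ s.card * (1 - p) ^ (A.card - s.card) else 0) := by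
    apply Finset.sum_le_sum
    intro s hs
    have hterm : (0:ℝ) ≤ p ^ s.card * (1 - p) ^ (A.card - s.card) := by positivity
    by_cases hst : IsStableSet (SimpleGraph.fromEdgeSet ↑s) S
    · rw [if_pos hst, if_pos]
      intro e hes
      rw [Finset.mem_sdiff]
      refine ⟨Finset.mem_powerset.1 hs hes, ?_⟩
      intro heB
      simp only [hB, insidePairs, hA, allPairs, Finset.mem_filter, Finset.mem_univ,
        true_and] at heB
      obtain ⟨hnd, hmem⟩ := heB
      induction e with
      | _ u v =>
        have huv : u ≠ v := by
          intro h; exact hnd (Sym2.mk_isDiag_iff.2 h)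
        have hadj : (SimpleGraph.fromEdgeSet (↑s : Set (Sym2 (Fin n)))).Adj u v := by
          rw [SimpleGraph.fromEdgeSet_adj]
          exact ⟨by simpa using hes, huv⟩
        exact hst u (hmem u (by simp)) v (hmem v (by simp)) hadj
    · rw [if_neg hst]
      split
      · exact hterm
      · exact le_refl 0
  have step2 : ∑ s ∈ A.powerset,
      (if s ⊆ A \ B then p ^ s.card * (1 - p) ^ (A.card - s.card) else 0)
      = ∑ s ∈ (A \ B).powerset, p ^ s.card * (1 - p) ^ (A.card - s.card) := by
    rw [← Finset.sum_filter]
    congr 1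
    ext s
    simp only [Finset.mem_filter, Finset.mem_powerset]
    constructor
    · rintro ⟨-, h⟩; exact h
    · intro h; exact ⟨h.trans (Finset.sdiff_subset), h⟩
  have hcard : (A \ B).card = A.card - B.card := Finset.card_sdiff_of_subset hBA
  have hble : B.card ≤ A.card := Finset.card_le_card hBA
  have step3 : ∑ s ∈ (A \ B).powerset, p ^ s.card * (1 - p) ^ (A.card - s.card)
      = (1 - p) ^ B.card *
        ∑ s ∈ (A \ B).powerset, p ^ s.card * (1 - p) ^ ((A \ B).card - s.card) := by
    rw [Finset.mul_sum]
    apply Finset.sum_congr rfl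
    intro s hs
    have hsle : s.card ≤ (A \ B).card :=
      Finset.card_le_card (Finset.mem_powerset.1 hs)
    have : A.card - s.card = B.card + ((A \ B).card - s.card) := by omega
    rw [this, pow_add]
    ring
  have step4 : ∑ s ∈ (A \ B).powerset, p ^ s.card * (1 - p) ^ ((A \ B).card - s.card)
      = 1 := by
    have hpa := Finset.prod_add (fun _ : Sym2 (Fin n) => p) (fun _ => 1 - p) (A \ B)
    simp only [Finset.prod_const] at hpa
    have hl : (p + (1 - p)) ^ (A \ B).card = 1 := by
      have : p + (1 - p) = 1 := by ring
      rw [this, one_pow]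
    rw [hl] at hpa
    refine Eq.trans ?_ hpa.symm
    apply Finset.sum_congr rfl
    intro s hs
    rw [Finset.card_sdiff_of_subset (Finset.mem_powerset.1 hs)]
  calc _ ≤ _ := step1
    _ = _ := step2
    _ = (1 - p) ^ B.card := by rw [step3, step4, mul_one]
    _ = (1 - p) ^ (S.card.choose 2) := by rw [hB, insidePairs_card]



lemma exponent_bound {L p kr : ℝ} (hL1 : 1 ≤ L) (hp0 : 0 < p)
    (hk_ge : 6 * L / p ≤ kr) (hk12 : 12 ≤ kr) :
    L * kr - p * (kr * (kr - 1) / 2) ≤ -(3 * L ^ 2 / p) := by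
  have hL0 : 0 < L := by linarith
  have hpk : 6 * L ≤ p * kr := by
    rw [div_le_iff₀ hp0] at hk_ge
    linarith
  have h3Lp : 3 * L ^ 2 / p ≤ L * kr / 2 := by
    rw [div_le_iff₀ hp0] at hk_ge ⊢
    nlinarith
  have hbig : 3 * L * (kr - 1) ≤ p * (kr * (kr - 1) / 2) := by
    have hkr1 : (0:ℝ) ≤ (kr - 1) / 2 := by linarith
    have := mul_le_mul_of_nonneg_right hpk hkr1
    nlinarith
  have hmid : 3 * L * (kr / 2) ≤ 3 * L * (kr - 1) := by nlinarith
  nlinarith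

/-- There are `c₁, c₂ > 0` and `n₀` such that for every `n ≥ n₀` and
every `0 < p ≤ 1/2`,
`P[xc(STAB(G(n,p))) ≥ 2^{c₁·(ln n)²/p}] ≤ n^{−c₂·(ln n)/p}`. -/
theorem xcSTAB_whp_upper_bound :
    ∃ (c₁ c₂ : ℝ) (n₀ : ℕ), 0 < c₁ ∧ 0 < c₂ ∧
      ∀ n : ℕ, n₀ ≤ n → ∀ p : ℝ, 0 < p → p ≤ 1/2 →
        erProb n p (fun G => (2 : ℝ) ^ (c₁ * Real.log n ^ 2 / p) ≤ (xcSTAB G : ℝ))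
          ≤ (n : ℝ) ^ (-(c₂ * Real.log n / p)) := by
  refine ⟨20, 3, 3, by norm_num, by norm_num, ?_⟩
  intro n hn p hp0 hp12
  have hn3 : (3:ℝ) ≤ n := by exact_mod_cast hn
  have hn0 : (0:ℝ) < n := by linarith
  set L := Real.log n with hLdef
  have hL1 : 1 ≤ L := by
    rw [hLdef, ← Real.log_exp 1]
    apply Real.log_le_log (Real.exp_pos 1)
    calc Real.exp 1 ≤ 2.7182818286 := Real.exp_one_lt_d9.le
      _ ≤ n := by linarith
  have hL0 : 0 < L := by linarith
  have hp1 : p ≤ 1 := by linarith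
  have hq0 : (0:ℝ) ≤ 1 - p := by linarith
  have hratio_pos : 0 ≤ 6 * L / p := by positivity
  obtain ⟨k, hk_ge, hk_le⟩ : ∃ k : ℕ, 6 * L / p ≤ (k : ℝ) ∧ (k : ℝ) ≤ 6 * L / p + 1 :=
    ⟨⌈6 * L / p⌉₊, Nat.le_ceil _, (Nat.ceil_lt_add_one hratio_pos).le⟩
  have hLp : 12 ≤ 6 * L / p := by
    rw [le_div_iff₀ hp0]
    nlinarith
  have hk12 : (12 : ℝ) ≤ (k : ℝ) := le_trans hLp hk_ge
  have hk2 : 2 ≤ k := by exact_mod_cast (by linarith : (2:ℝ) ≤ (k:ℝ))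
  have epow : (n : ℝ) ^ (k : ℕ) = Real.exp (L * k) := by
    rw [← Real.rpow_natCast (n : ℝ) k, Real.rpow_def_of_pos hn0]
  set T : Finset (Finset (Fin n)) :=
    Finset.univ.filter (fun S : Finset (Fin n) => S.card = k) with hTdef
  -- Step 1: the xc event implies existence of a stable set of size k
  have himp : ∀ G : SimpleGraph (Fin n),
      (2 : ℝ) ^ (20 * L ^ 2 / p) ≤ (xcSTAB G : ℝ) →
      ∃ S ∈ T, IsStableSet G S := by
    intro G hG
    by_contra hno
    push_neg at hno
    have hsmall : ∀ s : Finset (Fin n), IsStableSet G s → s.card < k := by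
      intro s hs
      by_contra hbig
      push_neg at hbig
      obtain ⟨t, hts, htk⟩ := Finset.exists_subset_card_eq hbig
      exact hno t (by simp [hTdef, htk]) (stable_subset hs hts)
    have hcount : (xcSTAB G : ℝ) ≤ (n : ℝ) ^ (k : ℕ) := by
      have h1 : xcSTAB G ≤ Fintype.card {s : Finset (Fin n) // IsStableSet G s} :=
        xcSTAB_le_card G
      have h2 : Fintype.card {s : Finset (Fin n) // IsStableSet G s} ≤ n ^ k := by
        rw [Fintype.card_subtype]
        refine le_trans (Finset.card_le_card ?_) (card_small_subsets (by simp) (by omega))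
        intro s hs
        simp only [Finset.mem_filter, Finset.mem_univ, true_and] at hs ⊢
        exact hsmall s hs
      calc (xcSTAB G : ℝ) ≤ ((n ^ k : ℕ) : ℝ) := by exact_mod_cast le_trans h1 h2
        _ = (n : ℝ) ^ (k : ℕ) := by push_cast; ring
    have hlt : (n : ℝ) ^ (k : ℕ) < (2 : ℝ) ^ (20 * L ^ 2 / p) := by
      have e2 : (2 : ℝ) ^ (20 * L ^ 2 / p) = Real.exp (Real.log 2 * (20 * L ^ 2 / p)) := by
        rw [Real.rpow_def_of_pos (by norm_num : (0:ℝ) < 2)]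
      rw [epow, e2]
      apply Real.exp_lt_exp.2
      have hlog2 : (0.6931471803 : ℝ) < Real.log 2 := Real.log_two_gt_d9
      have h13 : (k : ℝ) ≤ 13 * L / p := by
        have h7 : (1:ℝ) ≤ 7 * L / p := by
          rw [le_div_iff₀ hp0]; nlinarith
        calc (k:ℝ) ≤ 6 * L / p + 1 := hk_le
          _ ≤ 6 * L / p + 7 * L / p := by linarith
          _ = 13 * L / p := by ring
      have hx : 0 < L ^ 2 / p := by positivity
      calc L * k ≤ L * (13 * L / p) := by
            apply mul_le_mul_of_nonneg_left h13 hL0.le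
        _ = 13 * (L ^ 2 / p) := by ring
        _ < 13.862943606 * (L ^ 2 / p) := by nlinarith
        _ = 0.6931471803 * (20 * L ^ 2 / p) := by ring
        _ ≤ Real.log 2 * (20 * L ^ 2 / p) := by
            apply mul_le_mul_of_nonneg_right hlog2.le (by positivity)
    linarith
  -- Step 2: union bound
  have hmono := erProb_mono n hp0.le hp1 himp
  have hub := erProb_union_bound n hp0.le hp1 T (fun S G => IsStableSet G S)
  have hTcard : T.card ≤ n ^ k := by
    have hT2 : T = Finset.powersetCard k (Finset.univ : Finset (Fin n)) := by
      rw [Finset.powersetCard_eq_filter, Finset.powerset_univ]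
    rw [hT2, Finset.card_powersetCard, Finset.card_univ, Fintype.card_fin]
    exact Nat.choose_le_pow n k
  have hsum : ∑ S ∈ T, erProb n p (fun G => IsStableSet G S)
      ≤ (n : ℝ) ^ (k : ℕ) * (1 - p) ^ (k.choose 2) := by
    calc ∑ S ∈ T, erProb n p (fun G => IsStableSet G S)
        ≤ ∑ _S ∈ T, (1 - p) ^ (k.choose 2) := by
          apply Finset.sum_le_sum
          intro S hS
          have hSk : S.card = k := by simpa [hTdef] using hS
          calc erProb n p (fun G => IsStableSet G S)
              ≤ (1 - p) ^ (S.card.choose 2) := erProb_stable_le n hp0.le hp1 S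
            _ = (1 - p) ^ (k.choose 2) := by rw [hSk]
      _ = (T.card : ℝ) * (1 - p) ^ (k.choose 2) := by
          rw [Finset.sum_const, nsmul_eq_mul]
      _ ≤ (n : ℝ) ^ (k : ℕ) * (1 - p) ^ (k.choose 2) := by
          apply mul_le_mul_of_nonneg_right _ (by positivity)
          calc (T.card : ℝ) ≤ ((n ^ k : ℕ) : ℝ) := by exact_mod_cast hTcard
            _ = (n : ℝ) ^ (k : ℕ) := by push_cast; ring
  -- Step 3: analytic estimate
  have hchoose : 2 * k.choose 2 = k * (k - 1) := by
    rw [Nat.choose_two_right]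
    exact Nat.mul_div_cancel' (Nat.even_mul_pred_self k).two_dvd
  have hk1 : 1 ≤ k := by omega
  have hchooseR : (k.choose 2 : ℝ) = (k:ℝ) * ((k:ℝ) - 1) / 2 := by
    have hc := congrArg (fun m : ℕ => (m : ℝ)) hchoose
    push_cast [hk1] at hc
    linarith
  have hanal : (n : ℝ) ^ (k : ℕ) * (1 - p) ^ (k.choose 2)
      ≤ (n : ℝ) ^ (-(3 * L / p)) := by
    have hpow : (1 - p) ^ (k.choose 2) ≤ Real.exp (-(p * (k.choose 2 : ℝ))) := by
      have h1 : 1 - p ≤ Real.exp (-p) := by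
        have := Real.add_one_le_exp (-p)
        linarith
      calc (1 - p) ^ (k.choose 2) ≤ (Real.exp (-p)) ^ (k.choose 2) :=
            pow_le_pow_left₀ hq0 h1 _
        _ = Real.exp ((k.choose 2 : ℝ) * (-p)) := (Real.exp_nat_mul _ _).symm
        _ = Real.exp (-(p * (k.choose 2 : ℝ))) := by ring_nf
    have hrhs : (n : ℝ) ^ (-(3 * L / p)) = Real.exp (-(3 * L ^ 2 / p)) := by
      rw [Real.rpow_def_of_pos hn0]
      congr 1
      rw [← hLdef]
      ring
    calc (n:ℝ) ^ (k:ℕ) * (1 - p) ^ (k.choose 2)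
        ≤ Real.exp (L * k) * Real.exp (-(p * (k.choose 2 : ℝ))) := by
          rw [epow]
          apply mul_le_mul_of_nonneg_left hpow (Real.exp_pos _).le
      _ = Real.exp (L * k - p * (k.choose 2 : ℝ)) := by
          rw [← Real.exp_add]; ring_nf
      _ ≤ Real.exp (-(3 * L ^ 2 / p)) := by
          apply Real.exp_le_exp.2
          rw [hchooseR]
          exact exponent_bound hL1 hp0 hk_ge hk12
      _ = (n : ℝ) ^ (-(3 * L / p)) := hrhs.symm
  -- assemble
  calc erProb n p (fun G => (2 : ℝ) ^ (20 * L ^ 2 / p) ≤ (xcSTAB G : ℝ))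
      ≤ erProb n p (fun G => ∃ S ∈ T, IsStableSet G S) := hmono
    _ ≤ ∑ S ∈ T, erProb n p (fun G => IsStableSet G S) := hub
    _ ≤ (n : ℝ) ^ (k : ℕ) * (1 - p) ^ (k.choose 2) := hsum
    _ ≤ (n : ℝ) ^ (-(3 * L / p)) := hanal
end
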